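/- arXiv:0908.0582 — 11 statements merged into one kernel-verified Lean document; each statement's English description precedes it below -/
import Mathlib

section
/- Let h ≥ 1 and let P = ∑_{g ∈ ℤ^h} c_g g be a finitely supported element of the group ring ℂ[ℤ^h] with c_g = conj(c_{−g}) for all g, and let l₁(P) = ∑_g |c_g|. Then for every λ ∈ ℂ with |λ| · l₁(P) < 1, the real part of −∑_{n=1}^{∞} a_n λ^n / n, where a_n = [P^n]_0, equals the classical Mahler measure of 1 − λP, i.e. equals (1/(2π)^h) ∫_{[0,2π]^h} log |1 − λ · ∑_g c_g e^{i(g_1θ_1 + ⋯ + g_hθ_h)}| dθ_1 ⋯ dθ_h. -/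
open MeasureTheory Real

namespace MahlerAux

noncomputable section

lemma integral_exp_int (k : ℤ) :
    ∫ t in Set.Icc (0:ℝ) (2*π), Complex.exp (Complex.I * k * t)
      = if k = 0 then ((2*π : ℝ) : ℂ) else 0 := by
  rw [MeasureTheory.integral_Icc_eq_integral_Ioc,
    ← intervalIntegral.integral_of_le (by positivity : (0:ℝ) ≤ 2*π)]
  rcases eq_or_ne k 0 with rfl | hk
  · simp
  · rw [if_neg hk, integral_exp_mul_complex (by simp [hk, Complex.I_ne_zero] : Complex.I * (k:ℂ) ≠ 0)]
    have h1 : Complex.I * (k:ℂ) * ((2*π : ℝ) : ℂ) = (k : ℂ) * (2 * (π:ℂ) * Complex.I) := by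
      push_cast; ring
    rw [h1, Complex.exp_int_mul_two_pi_mul_I]
    simp

variable {h : ℕ}

lemma indicator_pi_prod (s : Set ℝ) (f : Fin h → ℝ → ℂ) (θ : Fin h → ℝ) :
    (Set.univ.pi (fun _ : Fin h => s)).indicator (fun θ => ∏ i, f i (θ i)) θ
      = ∏ i, s.indicator (f i) (θ i) := by
  by_cases hθ : θ ∈ Set.univ.pi (fun _ : Fin h => s)
  · rw [Set.indicator_of_mem hθ]
    exact Finset.prod_congr rfl fun i _ =>
      (Set.indicator_of_mem (hθ i (Set.mem_univ i)) _).symm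
  · rw [Set.indicator_of_notMem hθ]
    rw [Set.mem_univ_pi] at hθ; push_neg at hθ
    obtain ⟨i, hi⟩ := hθ
    exact (Finset.prod_eq_zero (Finset.mem_univ i) (Set.indicator_of_notMem hi _)).symm

lemma integral_box_exp (g : Fin h → ℤ) :
    ∫ θ in Set.univ.pi (fun _ : Fin h => Set.Icc (0:ℝ) (2*π)),
      Complex.exp (Complex.I * ∑ i, (g i : ℂ) * (θ i : ℂ))
      = if g = 0 then (((2*π : ℝ)^h : ℝ) : ℂ) else 0 := by
  have key : ∀ θ : Fin h → ℝ, Complex.exp (Complex.I * ∑ i, (g i:ℂ) * (θ i:ℂ))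
      = ∏ i, Complex.exp (Complex.I * (g i : ℂ) * ((θ i : ℝ) : ℂ)) := by
    intro θ
    rw [← Complex.exp_sum]
    congr 1
    rw [Finset.mul_sum]
    exact Finset.sum_congr rfl fun i _ => by ring
  simp_rw [key]
  rw [← MeasureTheory.integral_indicator (MeasurableSet.univ_pi fun _ => measurableSet_Icc)]
  have hind : ∀ θ : Fin h → ℝ,
      (Set.univ.pi (fun _ : Fin h => Set.Icc (0:ℝ) (2*π))).indicator
        (fun θ => ∏ i, Complex.exp (Complex.I * (g i : ℂ) * ((θ i : ℝ) : ℂ))) θ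
      = ∏ i, (Set.Icc (0:ℝ) (2*π)).indicator
          (fun t => Complex.exp (Complex.I * (g i : ℂ) * (t : ℂ))) (θ i) :=
    indicator_pi_prod _ (fun i t => Complex.exp (Complex.I * (g i : ℂ) * (t : ℂ)))
  rw [funext hind]
  rw [MeasureTheory.integral_fintype_prod_volume_eq_prod (ι := Fin h)
    (f := fun i t => (Set.Icc (0:ℝ) (2*π)).indicator
      (fun x => Complex.exp (Complex.I * (g i : ℂ) * (x : ℂ))) t)]
  simp_rw [MeasureTheory.integral_indicator measurableSet_Icc, integral_exp_int]
  rcases eq_or_ne g 0 with rfl | hg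
  · simp
  · rw [if_neg hg]
    obtain ⟨i, hi⟩ : ∃ i, g i ≠ 0 := by
      by_contra hc; push_neg at hc; exact hg (funext hc)
    exact Finset.prod_eq_zero (Finset.mem_univ i) (if_neg hi)

def char (h : ℕ) (θ : Fin h → ℝ) : Multiplicative (Fin h → ℤ) →* ℂ where
  toFun g := Complex.exp (Complex.I * ∑ i, ((Multiplicative.toAdd g) i : ℂ) * ((θ i : ℝ) : ℂ))
  map_one' := by simp
  map_mul' x y := by
    rw [← Complex.exp_add, ← mul_add, ← Finset.sum_add_distrib]
    congr 2
    refine Finset.sum_congr rfl fun i _ => ?_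
    have hxy : Multiplicative.toAdd (x * y) i
        = Multiplicative.toAdd x i + Multiplicative.toAdd y i := rfl
    rw [hxy]; push_cast; ring

lemma lift_eq (Q : AddMonoidAlgebra ℂ (Fin h → ℤ)) (θ : Fin h → ℝ) :
    (AddMonoidAlgebra.lift ℂ ℂ (Fin h → ℤ)) (char h θ) Q
      = ∑ g ∈ Q.coeff.support, Q.coeff g * Complex.exp (Complex.I * ∑ i, (g i : ℂ) * ((θ i : ℝ) : ℂ)) := by
  rw [AddMonoidAlgebra.lift_apply]
  rw [Finsupp.sum]
  exact Finset.sum_congr rfl fun g _ => by simp [char, smul_eq_mul]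

lemma continuous_E (g : Fin h → ℤ) :
    Continuous (fun θ : Fin h → ℝ =>
      Complex.exp (Complex.I * ∑ i, (g i : ℂ) * ((θ i : ℝ) : ℂ))) := by
  apply Complex.continuous_exp.comp
  exact continuous_const.mul (continuous_finset_sum _ fun i _ =>
    continuous_const.mul (Complex.continuous_ofReal.comp (continuous_apply i)))

lemma abs_E (g : Fin h → ℤ) (θ : Fin h → ℝ) :
    ‖Complex.exp (Complex.I * ∑ i, (g i : ℂ) * ((θ i : ℝ) : ℂ))‖ = 1 := by
  have hc : (∑ i, (g i : ℂ) * ((θ i : ℝ) : ℂ)) = (((∑ i, (g i : ℝ) * θ i : ℝ)) : ℂ) := by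
    push_cast; ring
  rw [hc, Complex.norm_exp]
  simp [Complex.mul_re]

lemma isCompact_box : IsCompact (Set.univ.pi (fun _ : Fin h => Set.Icc (0:ℝ) (2*π))) :=
  isCompact_univ_pi fun _ => isCompact_Icc

lemma integral_box_eval (Q : AddMonoidAlgebra ℂ (Fin h → ℤ)) :
    ∫ θ in Set.univ.pi (fun _ : Fin h => Set.Icc (0:ℝ) (2*π)),
      ∑ g ∈ Q.coeff.support, Q.coeff g * Complex.exp (Complex.I * ∑ i, (g i : ℂ) * ((θ i : ℝ) : ℂ))
      = (((2*π : ℝ)^h : ℝ) : ℂ) * Q.coeff 0 := by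
  rw [MeasureTheory.integral_finset_sum _ (μ := volume.restrict (Set.univ.pi (fun _ : Fin h => Set.Icc (0:ℝ) (2*π)))) (f := fun g θ => Q.coeff g * Complex.exp (Complex.I * ∑ i, (g i : ℂ) * ((θ i : ℝ) : ℂ))) (fun g _ =>
    (((continuous_const.mul (continuous_E g) : Continuous fun θ : Fin h → ℝ => Q.coeff g * Complex.exp (Complex.I * ∑ i, (g i : ℂ) * ((θ i : ℝ) : ℂ)))).continuousOn.integrableOn_compact isCompact_box))]
  simp_rw [MeasureTheory.integral_const_mul, integral_box_exp, mul_ite, mul_zero]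
  rw [Finset.sum_ite_eq' Q.coeff.support (0 : Fin h → ℤ)]
  by_cases h0 : (0 : Fin h → ℤ) ∈ Q.coeff.support
  · rw [if_pos h0]; ring
  · rw [if_neg h0, Finsupp.notMem_support_iff.mp h0, mul_zero]

end

end MahlerAux

/-- For `Γ = ℤ^h` and a self-adjoint `P ∈ ℂ[ℤ^h]`, the real part of the
Lück–Fuglede–Kadison determinant series `-∑ a_n λ^n / n` equals the classical
Mahler measure of `1 - λP`. -/
theorem mahler_measure_eq_classical (h : ℕ) (hh : 1 ≤ h)
    (P : AddMonoidAlgebra ℂ (Fin h → ℤ))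
    (hP : ∀ g : Fin h → ℤ, P.coeff g = starRingEnd ℂ (P.coeff (-g)))
    (a : ℕ → ℂ) (ha : ∀ n, a n = (P ^ n).coeff 0)
    (lam : ℂ) (hl : ‖lam‖ * ∑ g ∈ P.coeff.support, ‖P.coeff g‖ < 1) :
    (-∑' n : ℕ, a (n + 1) * lam ^ (n + 1) / (n + 1)).re =
      (1 / (2 * π) ^ h) *
        ∫ θ in Set.univ.pi (fun _ : Fin h => Set.Icc (0 : ℝ) (2 * π)),
          Real.log (‖
            (1 - lam * ∑ g ∈ P.coeff.support,
              P.coeff g * Complex.exp (Complex.I * ∑ i, (g i : ℂ) * (θ i : ℂ)))‖) := by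
  classical
  set B := Set.univ.pi (fun _ : Fin h => Set.Icc (0:ℝ) (2*π)) with hBdef
  set L : ℝ := ∑ g ∈ P.coeff.support, ‖P.coeff g‖ with hLdef
  have hL0 : 0 ≤ L := Finset.sum_nonneg fun _ _ => norm_nonneg _
  set r : ℝ := ‖lam‖ * L with hrdef
  have hr0 : 0 ≤ r := mul_nonneg (norm_nonneg _) hL0
  have hr1 : r < 1 := hl
  set F : (Fin h → ℝ) → ℂ := fun θ =>
    ∑ g ∈ P.coeff.support, P.coeff g * Complex.exp (Complex.I * ∑ i, (g i : ℂ) * ((θ i : ℝ) : ℂ)) with hFdef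
  have hFcont : Continuous F :=
    continuous_finset_sum _ fun g _ => continuous_const.mul (MahlerAux.continuous_E g)
  have hFle : ∀ θ, ‖F θ‖ ≤ L := by
    intro θ
    refine le_trans (norm_sum_le _ _) ?_
    refine le_of_eq (Finset.sum_congr rfl fun g _ => ?_)
    rw [norm_mul, MahlerAux.abs_E, mul_one]
  have hw : ∀ θ, ‖lam * F θ‖ ≤ r := by
    intro θ
    rw [norm_mul]
    exact mul_le_mul_of_nonneg_left (hFle θ) (norm_nonneg _)
  have hw1 : ∀ θ, ‖lam * F θ‖ < 1 := fun θ => lt_of_le_of_lt (hw θ) hr1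
  -- the log series
  set G : ℕ → (Fin h → ℝ) → ℂ := fun n θ => (lam * F θ)^(n+1)/((n:ℂ)+1) with hGdef
  have hlog : ∀ θ, HasSum (fun n : ℕ => G n θ) (-Complex.log (1 - lam * F θ)) := by
    intro θ
    have h0 := Complex.hasSum_taylorSeries_neg_log (z := lam * F θ) (hw1 θ)
    have h1 := (hasSum_nat_add_iff' (f := fun n : ℕ => (lam * F θ)^n / (n:ℂ)) 1).mpr h0
    simpa [hGdef] using h1
  -- integrability and bounds
  have hGcont : ∀ n, Continuous (G n) := fun n =>
    ((continuous_const.mul hFcont).pow (n+1)).div_const _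
  have hGint : ∀ n, IntegrableOn (G n) B :=
    fun n => ((hGcont n).continuousOn).integrableOn_compact MahlerAux.isCompact_box
  have hGbound : ∀ n θ, ‖G n θ‖ ≤ r^(n+1) := by
    intro n θ
    rw [hGdef]
    simp only [norm_div, norm_pow]
    refine le_trans (div_le_self (by positivity) ?_) ?_
    · rw [show ((n:ℂ)+1) = ((n+1 : ℕ) : ℂ) by push_cast; ring]
      rw [Complex.norm_natCast]
      exact_mod_cast Nat.one_le_iff_ne_zero.mpr (Nat.succ_ne_zero n)
    · exact pow_le_pow_left₀ (norm_nonneg _) (hw θ) (n+1)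
  have hBfin : volume B < ⊤ := MahlerAux.isCompact_box.measure_lt_top
  haveI : IsFiniteMeasure (volume.restrict B) :=
    ⟨by rw [Measure.restrict_apply_univ]; exact hBfin⟩
  set V : ℝ := (volume B).toReal with hVdef
  have hnorm_int : ∀ n, (∫ θ in B, ‖G n θ‖) ≤ V * r^(n+1) := by
    intro n
    calc (∫ θ in B, ‖G n θ‖) ≤ ∫ _θ in B, r^(n+1) :=
          integral_mono (hGint n).norm (integrable_const _) (fun θ => hGbound n θ)
      _ = V * r^(n+1) := by
          rw [setIntegral_const, smul_eq_mul]; rfl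
  have hsum_geom : Summable (fun n : ℕ => V * r^(n+1)) := by
    have := (summable_geometric_of_lt_one hr0 hr1).mul_left (V * r)
    refine this.congr fun n => ?_
    rw [pow_succ]; ring
  have hsum_norm : Summable (fun n => ∫ θ in B, ‖G n θ‖) :=
    Summable.of_nonneg_of_le (fun n => integral_nonneg fun θ => norm_nonneg _)
      hnorm_int hsum_geom
  have key := MeasureTheory.hasSum_integral_of_summable_integral_norm
    (μ := volume.restrict B) hGint hsum_norm
  -- compute each integral
  have hFpow : ∀ (n : ℕ) (θ : Fin h → ℝ), F θ ^ n
      = ∑ g ∈ (P^n).coeff.support, (P^n).coeff g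
          * Complex.exp (Complex.I * ∑ i, (g i : ℂ) * ((θ i : ℝ) : ℂ)) := by
    intro n θ
    rw [← MahlerAux.lift_eq (P^n) θ, map_pow, MahlerAux.lift_eq P θ]
  set c : ℂ := (((2*π : ℝ)^h : ℝ) : ℂ) with hcdef
  have hc0 : c ≠ 0 := by
    rw [hcdef]
    exact_mod_cast (by positivity : ((2*π : ℝ)^h : ℝ) ≠ 0)
  have hGval : ∀ n, (∫ θ in B, G n θ) = c * (a (n+1) * lam^(n+1) / ((n:ℂ)+1)) := by
    intro n
    have hEq : ∀ θ, G n θ = (lam^(n+1)/((n:ℂ)+1)) * (F θ)^(n+1) := by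
      intro θ; rw [hGdef]; simp only [mul_pow]; ring
    rw [funext hEq, MeasureTheory.integral_const_mul]
    simp_rw [hFpow (n+1)]
    rw [MahlerAux.integral_box_eval (P^(n+1)), ← ha (n+1)]
    ring
  -- identify the integrand
  have htsum : ∀ θ, (∑' n, G n θ) = -Complex.log (1 - lam * F θ) :=
    fun θ => (hlog θ).tsum_eq
  have e1 : (∫ θ in B, ∑' n, G n θ) = ∫ θ in B, -Complex.log (1 - lam * F θ) :=
    integral_congr_ae (Filter.Eventually.of_forall fun θ => htsum θ)
  rw [e1, funext hGval] at key
  -- integrability of the log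
  have hlogcont : Continuous (fun θ => Complex.log (1 - lam * F θ)) := by
    refine (continuous_const.sub (continuous_const.mul hFcont)).clog fun θ => ?_
    rw [sub_eq_add_neg]
    exact Complex.mem_slitPlane_of_norm_lt_one (by rw [Pi.neg_apply, norm_neg]; exact hw1 θ)
  have hlogint : IntegrableOn (fun θ => Complex.log (1 - lam * F θ)) B :=
    hlogcont.continuousOn.integrableOn_compact MahlerAux.isCompact_box
  -- extract the sum
  have key2 : HasSum (fun n => a (n+1) * lam^(n+1) / ((n:ℂ)+1))
      (c⁻¹ * ∫ θ in B, -Complex.log (1 - lam * F θ)) := by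
    have := key.mul_left c⁻¹
    refine this.congr_fun fun n => ?_
    rw [← mul_assoc, inv_mul_cancel₀ hc0, one_mul]
  have hS : (∑' n : ℕ, a (n + 1) * lam ^ (n + 1) / ((n:ℂ) + 1))
      = c⁻¹ * ∫ θ in B, -Complex.log (1 - lam * F θ) := key2.tsum_eq
  -- real parts
  have hre : (∫ θ in B, Real.log (‖1 - lam * F θ‖))
      = (∫ θ in B, Complex.log (1 - lam * F θ)).re := by
    have h2 := integral_re (𝕜 := ℂ) hlogint
    simpa [Complex.log_re] using h2
  have hgoal_rhs : (fun θ : Fin h → ℝ => Real.log (‖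
      (1 - lam * ∑ g ∈ P.coeff.support,
        P.coeff g * Complex.exp (Complex.I * ∑ i, (g i : ℂ) * ((θ i : ℝ) : ℂ)))‖))
      = fun θ => Real.log (‖1 - lam * F θ‖) := rfl
  rw [hgoal_rhs]  -- may fail; the goal RHS integrand should be syntactically this
  rw [hS, hre]
  rw [MeasureTheory.integral_neg]
  rw [mul_neg, neg_neg]
  have hcinv : c⁻¹ = ((((2*π : ℝ)^h : ℝ)⁻¹ : ℝ) : ℂ) := by
    rw [hcdef, Complex.ofReal_inv]
  rw [hcinv, Complex.re_ofReal_mul]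
  rw [one_div]
end

section
/- Let Γ be a finite group, let P ∈ ℂ[Γ], and let M_P : ℂ[Γ] → ℂ[Γ] be the ℂ-linear map given by left multiplication by P. Let l₁(P) be the sum of the absolute values of the coefficients of P, and let λ ∈ ℂ with |λ| · l₁(P) < 1. Then, with a_n = [P^n]_0, one has exp( −|Γ| · ∑_{n=1}^{∞} a_n λ^n / n ) = det(1 − λ M_P). -/
open LinearMap Polynomial Set Matrix Finset

private noncomputable instance maFinite' (Γ : Type*) [Group Γ] [Fintype Γ] :
    Module.Finite ℂ (MonoidAlgebra ℂ Γ) :=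
  Module.Finite.equiv (MonoidAlgebra.coeffLinearEquiv ℂ).symm

private theorem my_det_blockDiagonal' {o : Type*} [Fintype o] [DecidableEq o] {κ : o → Type*}
    [∀ i, Fintype (κ i)] [∀ i, DecidableEq (κ i)] {R : Type*} [CommRing R]
    (d : ∀ i, Matrix (κ i) (κ i) R) :
    (Matrix.blockDiagonal' d).det = ∏ i, (d i).det := by
  let e := Fintype.equivFin o
  letI : LinearOrder o := LinearOrder.lift' e e.injective
  have hbt : BlockTriangular (blockDiagonal' d) Sigma.fst :=
    blockTriangular_blockDiagonal' d
  rw [hbt.det]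
  have hblock : ∀ a : o, ((blockDiagonal' d).toSquareBlock Sigma.fst a).det = (d a).det := by
    intro a
    let eqv : {k : Σ i, κ i // k.fst = a} ≃ κ a :=
      { toFun := fun k => k.2 ▸ k.1.snd
        invFun := fun x => ⟨⟨a, x⟩, rfl⟩
        left_inv := by rintro ⟨⟨i, x⟩, rfl⟩; rfl
        right_inv := fun x => rfl }
    have : (blockDiagonal' d).toSquareBlock Sigma.fst a = (d a).submatrix eqv eqv := by
      ext k l
      obtain ⟨⟨i, x⟩, rfl⟩ := k
      obtain ⟨⟨j, y⟩, hl⟩ := l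
      have hl' : j = i := hl
      subst hl'
      simp [toSquareBlock_def, submatrix_apply, eqv, blockDiagonal'_apply_eq]
    rw [this, Matrix.det_submatrix_equiv_self]
  rw [Finset.prod_congr rfl fun a _ => hblock a]
  apply Finset.prod_subset (Finset.subset_univ _)
  intro a _ ha
  have : IsEmpty (κ a) := by
    by_contra h
    rw [not_isEmpty_iff] at h
    obtain ⟨x⟩ := h
    exact ha (Finset.mem_image.mpr ⟨⟨a, x⟩, Finset.mem_univ _, rfl⟩)
  exact Matrix.det_isEmpty

private theorem det_eq_prod_restrict {ι K M : Type*} [DecidableEq ι] [Field K] [AddCommGroup M]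
    [Module K M] [Module.Finite K M] {N : ι → Submodule K M} (hds : DirectSum.IsInternal N)
    (h_fin : {μ | N μ ≠ ⊥}.Finite) {F : Module.End K M}
    (hmaps : ∀ μ, Set.MapsTo F (N μ) (N μ)) :
    LinearMap.det F = ∏ μ ∈ h_fin.toFinset, LinearMap.det (F.restrict (hmaps μ)) := by
  classical
  let _ : Fintype {μ // N μ ≠ ⊥} := h_fin.fintype
  let _ : Fintype {μ : ι | N μ ≠ ⊥} := h_fin.fintype
  have h' : DirectSum.IsInternal (fun i : {μ // N μ ≠ ⊥} => N i) :=
    DirectSum.isInternal_ne_bot_iff.mpr hds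
  let b : (i : {μ // N μ ≠ ⊥}) → Module.Basis _ K (N i) := fun i => Module.Free.chooseBasis K (N i)
  have hm' : ∀ i : {μ // N μ ≠ ⊥}, Set.MapsTo F (N i) (N i) := fun i => hmaps i
  rw [← LinearMap.det_toMatrix (h'.collectedBasis b),
    toMatrix_directSum_collectedBasis_eq_blockDiagonal' h' h' b b hm',
    my_det_blockDiagonal']
  rw [← Finset.prod_coe_sort h_fin.toFinset (fun μ => LinearMap.det (F.restrict (hmaps μ)))]
  refine Fintype.prod_equiv h_fin.subtypeEquivToFinset _ _ fun i => ?_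
  rw [LinearMap.det_toMatrix]
  rfl

private theorem my_eval_charpoly {n : Type*} [DecidableEq n] [Fintype n] {R : Type*} [CommRing R]
    (M : Matrix n n R) (x : R) : M.charpoly.eval x = (x • (1 : Matrix n n R) - M).det := by
  rw [Matrix.charpoly, eval_det, Matrix.matPolyEquiv_charmatrix]
  simp [Matrix.smul_one_eq_diagonal]

private theorem my_eval_charpoly' {K M : Type*} [Field K] [AddCommGroup M] [Module K M]
    [Module.Finite K M] (φ : Module.End K M) (x : K) :
    (LinearMap.charpoly φ).eval x = LinearMap.det (x • (1 : Module.End K M) - φ) := by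
  let b := Module.Free.chooseBasis K M
  rw [← LinearMap.charpoly_toMatrix φ b, my_eval_charpoly, ← LinearMap.det_toMatrix b]
  congr 1
  rw [map_sub, _root_.map_smul]
  congr 1
  simp [toMatrix_one]

private theorem det_smul_one_sub_nilpotent {K M : Type*} [Field K] [AddCommGroup M] [Module K M]
    [Module.Finite K M] {m : Module.End K M} (hm : IsNilpotent m) (c : K) (lam : K) :
    LinearMap.det (c • (1 : Module.End K M) - lam • m) = c ^ Module.finrank K M := by
  rcases eq_or_ne lam 0 with rfl | hlam
  · rw [zero_smul, sub_zero, LinearMap.det_smul]; simp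
  · have h1 : c • (1 : Module.End K M) - lam • m = lam • ((c/lam) • 1 - m) := by
      rw [smul_sub, smul_smul]; field_simp
    rw [h1, LinearMap.det_smul, ← my_eval_charpoly', hm.charpoly_eq_X_pow_finrank]
    rw [eval_pow, eval_X, div_pow]
    field_simp

private theorem trace_pow_block {K M : Type*} [Field K] [AddCommGroup M] [Module K M]
    [Module.Finite K M] {g : Module.End K M} {μ : K}
    (hg : IsNilpotent (g - algebraMap K (Module.End K M) μ)) (n : ℕ) :
    trace K M (g ^ n) = μ ^ n * (Module.finrank K M : K) := by
  induction n with
  | zero => simp [LinearMap.trace_one]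
  | succ n ih =>
    have := LinearMap.trace_comp_eq_mul_of_commute_of_isNilpotent μ
      (Commute.pow_left (Commute.refl g) n) hg
    rw [← Module.End.mul_eq_comp] at this
    rw [pow_succ, this, ih]; ring

private theorem det_block {K M : Type*} [Field K] [AddCommGroup M] [Module K M]
    [Module.Finite K M] {g : Module.End K M} {μ : K} (lam : K)
    (hg : IsNilpotent (g - algebraMap K (Module.End K M) μ)) :
    LinearMap.det (1 - lam • g) = (1 - lam * μ) ^ Module.finrank K M := by
  have h1 : (1 : Module.End K M) - lam • g
      = (1 - lam * μ) • 1 - lam • (g - algebraMap K (Module.End K M) μ) := by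
    have : algebraMap K (Module.End K M) μ = μ • 1 := by
      simp [Algebra.algebraMap_eq_smul_one]
    rw [this, smul_sub, smul_smul, sub_smul, one_smul]
    abel
  rw [h1, det_smul_one_sub_nilpotent hg]

private theorem trace_mulLeft {Γ : Type*} [Group Γ] [Fintype Γ] [DecidableEq Γ]
    (Q : MonoidAlgebra ℂ Γ) :
    trace ℂ _ (mulLeft ℂ Q) = (Fintype.card Γ : ℂ) * Q.coeff 1 := by
  classical
  let mb : Module.Basis Γ ℂ (MonoidAlgebra ℂ Γ) := MonoidAlgebra.basis Γ ℂ
  rw [trace_eq_matrix_trace ℂ mb, Matrix.trace]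
  have h3 : ∀ g : Γ, ((toMatrix mb mb) (mulLeft ℂ Q)).diag g = Q.coeff 1 := by
    intro g
    rw [Matrix.diag_apply, toMatrix_apply]
    have h2 : (mb.repr (mulLeft ℂ Q (mb g))) g
        = (Q * MonoidAlgebra.single g (1:ℂ)).coeff g := rfl
    rw [h2, MonoidAlgebra.coeff_mul_single_apply]
    simp
  rw [Finset.sum_congr rfl fun g _ => h3 g]
  simp [Finset.card_univ, mul_comm]

private theorem eig_bound {Γ : Type*} [Group Γ] [Fintype Γ] (P : MonoidAlgebra ℂ Γ) (μ : ℂ)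
    (hμ : Module.End.maxGenEigenspace (mulLeft ℂ P) μ ≠ ⊥) :
    ‖μ‖ ≤ ∑ g ∈ P.coeff.support, ‖P.coeff g‖ := by
  have hev : Module.End.HasEigenvalue (mulLeft ℂ P) μ :=
    Module.End.HasUnifEigenvalue.lt zero_lt_one hμ
  obtain ⟨v, hv⟩ := hev.exists_hasEigenvector
  have hva : P * v = μ • v := hv.apply_eq_smul
  obtain ⟨g, -, hg⟩ := Finset.exists_max_image Finset.univ (fun x => ‖v.coeff x‖)
    ⟨1, Finset.mem_univ 1⟩
  have hvg : v.coeff g ≠ 0 := by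
    intro h0
    apply hv.right
    ext x
    have := hg x (Finset.mem_univ x)
    rw [h0] at this
    simpa using this
  have key : μ * v.coeff g = ∑ h ∈ P.coeff.support, P.coeff h * v.coeff (h⁻¹ * g) := by
    have : (P * v).coeff g = (μ • v).coeff g := by rw [hva]
    rw [MonoidAlgebra.coeff_mul_apply_left] at this
    simpa [Finsupp.sum] using this.symm
  have h1 : ‖μ‖ * ‖v.coeff g‖
      ≤ (∑ h ∈ P.coeff.support, ‖P.coeff h‖) * ‖v.coeff g‖ := by
    rw [← norm_mul, key]
    refine le_trans (norm_sum_le _ _) ?_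
    rw [Finset.sum_mul]
    refine Finset.sum_le_sum fun h _ => ?_
    rw [norm_mul]
    exact mul_le_mul_of_nonneg_left (hg _ (Finset.mem_univ _)) (norm_nonneg _)
  have hpos : 0 < ‖v.coeff g‖ := by
    simpa [norm_pos_iff] using hvg
  exact le_of_mul_le_mul_right h1 hpos

/-- For a finite group `Γ` and `P ∈ ℂ[Γ]`, with `|λ| · l₁(P) < 1` one has
`exp(-|Γ| · ∑_{n≥1} a_n λ^n / n) = det(1 - λ M_P)`, where `M_P` is left
multiplication by `P` on `ℂ[Γ]`. -/
theorem exp_mahler_eq_det (Γ : Type*) [Group Γ] [Fintype Γ] [DecidableEq Γ]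
    (P : MonoidAlgebra ℂ Γ)
    (a : ℕ → ℂ) (ha : ∀ n, a n = (P ^ n).coeff 1)
    (lam : ℂ) (hl : ‖lam‖ * ∑ g ∈ P.coeff.support, ‖P.coeff g‖ < 1) :
    Complex.exp (-(Fintype.card Γ : ℂ) * ∑' n : ℕ, a (n + 1) * lam ^ (n + 1) / (n + 1)) =
      LinearMap.det
        ((LinearMap.id : MonoidAlgebra ℂ Γ →ₗ[ℂ] MonoidAlgebra ℂ Γ)
          - lam • LinearMap.mulLeft ℂ P) := by
  classical
  have hV : Module.Finite ℂ (MonoidAlgebra ℂ Γ) := maFinite' Γ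
  set f : Module.End ℂ (MonoidAlgebra ℂ Γ) := mulLeft ℂ P with hfdef
  set N : ℂ → Submodule ℂ (MonoidAlgebra ℂ Γ) := fun μ => f.maxGenEigenspace μ with hNdef
  have hds : DirectSum.IsInternal N :=
    DirectSum.isInternal_submodule_of_iSupIndep_of_iSup_eq_top
      f.independent_maxGenEigenspace f.iSup_maxGenEigenspace_eq_top
  have h_fin : {μ | N μ ≠ ⊥}.Finite :=
    WellFoundedGT.finite_ne_bot_of_iSupIndep f.independent_maxGenEigenspace
  set s : Finset ℂ := h_fin.toFinset with hsdef
  have maps : ∀ μ, MapsTo f (N μ) (N μ) := fun μ =>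
    f.mapsTo_maxGenEigenspace_of_comm rfl μ
  set d : ℂ → ℕ := fun μ => Module.finrank ℂ (N μ) with hddef
  have hnil : ∀ μ, IsNilpotent (f.restrict (maps μ) - algebraMap ℂ _ μ) := fun μ =>
    f.isNilpotent_restrict_maxGenEigenspace_sub_algebraMap μ
  -- trace of powers
  have htr : ∀ n : ℕ, trace ℂ (MonoidAlgebra ℂ Γ) (f ^ n) = ∑ μ ∈ s, μ ^ n * (d μ : ℂ) := by
    intro n
    have hfn : ∀ μ, MapsTo (f ^ n) (N μ) (N μ) := fun μ =>
      f.mapsTo_maxGenEigenspace_of_comm (Commute.pow_right rfl n) μ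
    rw [trace_eq_sum_trace_restrict' hds h_fin hfn]
    refine Finset.sum_congr rfl fun μ _ => ?_
    rw [← Module.End.pow_restrict n (maps μ)]
    exact trace_pow_block (hnil μ) n
  -- |lam * μ| < 1 for eigenvalues
  have hsmall : ∀ μ ∈ s, ‖lam * μ‖ < 1 := by
    intro μ hμ
    have hμ' : N μ ≠ ⊥ := by rwa [hsdef, Set.Finite.mem_toFinset] at hμ
    have := eig_bound P μ hμ'
    calc ‖lam * μ‖ = ‖lam‖ * ‖μ‖ := norm_mul _ _
      _ ≤ ‖lam‖ * ∑ g ∈ P.coeff.support, ‖P.coeff g‖ :=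
        mul_le_mul_of_nonneg_left this (norm_nonneg _)
      _ < 1 := hl
  have hne1 : ∀ μ ∈ s, 1 - lam * μ ≠ 0 := by
    intro μ hμ h0
    have h2 : lam * μ = 1 := by linear_combination -h0
    have h3 := hsmall μ hμ
    rw [h2] at h3
    simp at h3
  -- the determinant
  have hdet : LinearMap.det
      ((LinearMap.id : MonoidAlgebra ℂ Γ →ₗ[ℂ] MonoidAlgebra ℂ Γ) - lam • LinearMap.mulLeft ℂ P)
      = ∏ μ ∈ s, (1 - lam * μ) ^ d μ := by
    have hmapsF : ∀ μ, MapsTo ((1 : Module.End ℂ (MonoidAlgebra ℂ Γ)) - lam • f) (N μ) (N μ) := by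
      intro μ x hx
      simpa using (N μ).sub_mem hx ((N μ).smul_mem lam (maps μ hx))
    have hid : (LinearMap.id : MonoidAlgebra ℂ Γ →ₗ[ℂ] MonoidAlgebra ℂ Γ) - lam • LinearMap.mulLeft ℂ P
        = (1 : Module.End ℂ (MonoidAlgebra ℂ Γ)) - lam • f := rfl
    rw [hid, det_eq_prod_restrict hds h_fin hmapsF]
    refine Finset.prod_congr rfl fun μ hμ => ?_
    have hres : ((1 : Module.End ℂ (MonoidAlgebra ℂ Γ)) - lam • f).restrict (hmapsF μ)
        = 1 - lam • (f.restrict (maps μ)) := by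
      ext x : 2
      rfl
    rw [hres, det_block lam (hnil μ)]
  -- the exponential part
  have hlog : ∀ μ ∈ s, HasSum (fun n : ℕ => (lam * μ) ^ (n + 1) / (n + 1))
      (-Complex.log (1 - lam * μ)) := by
    intro μ hμ
    have h0 := Complex.hasSum_taylorSeries_neg_log (z := lam * μ) (by
      simpa using hsmall μ hμ)
    have h2 := (hasSum_nat_add_iff' (f := fun n : ℕ => (lam * μ) ^ n / (n : ℂ)) 1).mpr h0
    simpa using h2
  have hterm : ∀ n : ℕ, (Fintype.card Γ : ℂ) * (a (n + 1) * lam ^ (n + 1) / (n + 1))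
      = ∑ μ ∈ s, (d μ : ℂ) * ((lam * μ) ^ (n + 1) / (n + 1)) := by
    intro n
    have h1 : (Fintype.card Γ : ℂ) * a (n + 1) = trace ℂ (MonoidAlgebra ℂ Γ) (f ^ (n + 1)) := by
      rw [ha, hfdef, LinearMap.pow_mulLeft, trace_mulLeft]
    calc (Fintype.card Γ : ℂ) * (a (n + 1) * lam ^ (n + 1) / (n + 1))
        = ((Fintype.card Γ : ℂ) * a (n + 1)) * lam ^ (n + 1) / (n + 1) := by ring
      _ = (∑ μ ∈ s, μ ^ (n + 1) * (d μ : ℂ)) * lam ^ (n + 1) / (n + 1) := by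
          rw [h1, htr (n + 1)]
      _ = ∑ μ ∈ s, (d μ : ℂ) * ((lam * μ) ^ (n + 1) / (n + 1)) := by
          rw [Finset.sum_mul, Finset.sum_div]
          refine Finset.sum_congr rfl fun μ _ => ?_
          rw [mul_pow]
          ring
  have hsum : HasSum (fun n : ℕ => (Fintype.card Γ : ℂ) * (a (n + 1) * lam ^ (n + 1) / (n + 1)))
      (∑ μ ∈ s, (d μ : ℂ) * (-Complex.log (1 - lam * μ))) := by
    rw [funext hterm]
    exact hasSum_sum fun μ hμ => (hlog μ hμ).mul_left _
  have htsum : (Fintype.card Γ : ℂ) * ∑' n : ℕ, a (n + 1) * lam ^ (n + 1) / (n + 1)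
      = ∑ μ ∈ s, (d μ : ℂ) * (-Complex.log (1 - lam * μ)) := by
    rw [← tsum_mul_left]
    exact hsum.tsum_eq
  rw [neg_mul, htsum, hdet]
  rw [← Finset.sum_neg_distrib]
  have : ∀ μ ∈ s, -((d μ : ℂ) * (-Complex.log (1 - lam * μ)))
      = (d μ : ℂ) * Complex.log (1 - lam * μ) := by intro μ _; ring
  rw [Finset.sum_congr rfl this, Complex.exp_sum]
  refine Finset.prod_congr rfl fun μ hμ => ?_
  rw [Complex.exp_nat_mul, Complex.exp_log (hne1 μ hμ)]
end

section
/- Let Γ = ℤ/m_1ℤ × ⋯ × ℤ/m_hℤ and let P = ∑_{g ∈ Γ} c_g g ∈ ℂ[Γ]. Let l₁(P) be the sum of the absolute values of the coefficients of P, and let λ ∈ ℂ with |λ| · l₁(P) < 1. Then, with a_n = [P^n]_0, one has exp( −|Γ| · ∑_{n=1}^{∞} a_n λ^n / n ) = ∏_{j_1=0}^{m_1−1} ⋯ ∏_{j_h=0}^{m_h−1} ( 1 − λ · ∑_{g ∈ Γ} c_g ξ_{m_1}^{j_1 g_1} ⋯ ξ_{m_h}^{j_h g_h} ), where ξ_m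 = e^{2πi/m} is a primitive m-th root of unity and g = (g_1,…,g_h). -/
open Real

namespace MahlerAux

variable {h : ℕ} {m : Fin h → ℕ}

/-- The character value `∏ i ξ_{m i}^{j i · g i}`. -/
noncomputable def c (j : ∀ i : Fin h, Fin (m i)) (g : ∀ i : Fin h, ZMod (m i)) : ℂ :=
  ∏ i, Complex.exp (2 * π * Complex.I * (j i : ℂ) * ((g i).val : ℂ) / (m i : ℂ))

lemma exp_eq_pow (m' : ℕ) (j v : ℕ) :
    Complex.exp (2 * π * Complex.I * (j : ℂ) * (v : ℂ) / (m' : ℂ))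
      = (Complex.exp (2 * π * Complex.I / m') ^ j) ^ v := by
  rw [← pow_mul, ← Complex.exp_nat_mul]
  congr 1
  push_cast
  ring

lemma abs_exp_eq_one (m' : ℕ) (j v : ℕ) :
    ‖Complex.exp (2 * π * Complex.I * (j : ℂ) * (v : ℂ) / (m' : ℂ))‖ = 1 := by
  have : (2 * (π : ℂ) * Complex.I * (j : ℂ) * (v : ℂ) / (m' : ℂ))
      = ((2 * π * j * v / m' : ℝ) : ℂ) * Complex.I := by
    push_cast
    ring
  rw [this, Complex.norm_exp_ofReal_mul_I]

lemma sum_exp_eq (m' : ℕ) (hm' : 1 ≤ m') (k : ℕ) (hk : k < m') :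
    ∑ j : Fin m', Complex.exp (2 * π * Complex.I * (j : ℂ) * (k : ℂ) / (m' : ℂ))
      = if k = 0 then (m' : ℂ) else 0 := by
  have h0 : m' ≠ 0 := by omega
  have hζ := Complex.isPrimitiveRoot_exp m' h0
  set ζ := Complex.exp (2 * π * Complex.I / m') with hζdef
  have hterm : ∀ j : Fin m',
      Complex.exp (2 * π * Complex.I * (j : ℂ) * (k : ℂ) / (m' : ℂ)) = (ζ ^ k) ^ (j : ℕ) := by
    intro j
    rw [exp_eq_pow m' j k, ← pow_mul, ← pow_mul, Nat.mul_comm]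
  simp only [hterm]
  rcases eq_or_ne k 0 with rfl | hk0
  · simp
  · rw [if_neg hk0]
    have hne : ζ ^ k ≠ 1 := by
      intro hE
      have : m' ∣ k := (IsPrimitiveRoot.pow_eq_one_iff_dvd hζ k).mp hE
      exact hk0 (Nat.eq_zero_of_dvd_of_lt this hk)
    have h1 : (ζ ^ k) ^ m' = 1 := by
      rw [← pow_mul, mul_comm k m', pow_mul, hζ.pow_eq_one, one_pow]
    rw [Fin.sum_univ_eq_sum_range (fun j => (ζ ^ k) ^ j) m', geom_sum_eq hne, h1, sub_self,
      zero_div]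

lemma sum_c (hm : ∀ i, 1 ≤ m i) [∀ i, NeZero (m i)] (g : ∀ i : Fin h, ZMod (m i)) :
    ∑ j : ∀ i : Fin h, Fin (m i), c j g = if g = 0 then ∏ i, (m i : ℂ) else 0 := by
  have hswap := Finset.prod_univ_sum (fun i : Fin h => (Finset.univ : Finset (Fin (m i))))
    (fun i j => Complex.exp (2 * π * Complex.I * (j : ℂ) * ((g i).val : ℂ) / (m i : ℂ)))
  rw [Fintype.piFinset_univ] at hswap
  unfold c
  rw [← hswap]
  have hfac : ∀ i : Fin h,
      ∑ j : Fin (m i), Complex.exp (2 * π * Complex.I * (j : ℂ) * ((g i).val : ℂ) / (m i : ℂ))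
        = if (g i).val = 0 then (m i : ℂ) else 0 :=
    fun i => sum_exp_eq (m i) (hm i) _ (ZMod.val_lt _)
  simp only [hfac]
  rcases eq_or_ne g 0 with rfl | hg
  · simp
  · rw [if_neg hg]
    obtain ⟨i, hi⟩ := Function.ne_iff.mp hg
    refine Finset.prod_eq_zero (Finset.mem_univ i) ?_
    rw [if_neg]
    simpa [ZMod.val_eq_zero] using hi

/-- The character as a monoid hom on `Multiplicative Γ`. -/
noncomputable def chr [∀ i, NeZero (m i)] (j : ∀ i : Fin h, Fin (m i)) :
    Multiplicative (∀ i : Fin h, ZMod (m i)) →* ℂ where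
  toFun g := c j (Multiplicative.toAdd g)
  map_one' := by
    unfold c
    simp
  map_mul' x y := by
    show c j (Multiplicative.toAdd x + Multiplicative.toAdd y)
        = c j (Multiplicative.toAdd x) * c j (Multiplicative.toAdd y)
    set a := Multiplicative.toAdd x
    set b := Multiplicative.toAdd y
    unfold c
    rw [← Finset.prod_mul_distrib]
    refine Finset.prod_congr rfl fun i _ => ?_
    have h0 : m i ≠ 0 := (NeZero.ne (m i))
    have hζ := Complex.isPrimitiveRoot_exp (m i) h0
    rw [exp_eq_pow (m i) (j i), exp_eq_pow (m i) (j i), exp_eq_pow (m i) (j i)]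
    set w := Complex.exp (2 * π * Complex.I / (m i)) ^ (j i : ℕ) with hw
    have hw1 : w ^ (m i) = 1 := by
      rw [hw, ← pow_mul, mul_comm (j i : ℕ) (m i), pow_mul, hζ.pow_eq_one, one_pow]
    have : ((a + b) i).val = ((a i).val + (b i).val) % (m i) := by
      rw [Pi.add_apply, ZMod.val_add]
    rw [this, ← pow_eq_pow_mod _ hw1, pow_add]

/-- The character extended to an algebra hom on the group algebra. -/
noncomputable def phi [∀ i, NeZero (m i)] (j : ∀ i : Fin h, Fin (m i)) :
    AddMonoidAlgebra ℂ (∀ i : Fin h, ZMod (m i)) →ₐ[ℂ] ℂ :=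
  AddMonoidAlgebra.lift ℂ ℂ _ (chr j)

lemma phi_apply [∀ i, NeZero (m i)] (j : ∀ i : Fin h, Fin (m i))
    (Q : AddMonoidAlgebra ℂ (∀ i : Fin h, ZMod (m i))) :
    phi j Q = ∑ g ∈ Q.coeff.support, Q.coeff g * c j g := by
  rw [phi, AddMonoidAlgebra.lift_apply, Finsupp.sum]
  refine Finset.sum_congr rfl fun g _ => ?_
  simp [chr, smul_eq_mul]

lemma key (hm : ∀ i, 1 ≤ m i) [∀ i, NeZero (m i)]
    (Q : AddMonoidAlgebra ℂ (∀ i : Fin h, ZMod (m i))) :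
    ∑ j : ∀ i : Fin h, Fin (m i), phi j Q = (∏ i, (m i : ℂ)) * Q.coeff 0 := by
  simp only [phi_apply]
  rw [Finset.sum_comm]
  have : ∀ g ∈ Q.coeff.support, ∑ j : ∀ i : Fin h, Fin (m i), Q.coeff g * c j g
      = if g = 0 then Q.coeff g * ∏ i, (m i : ℂ) else 0 := by
    intro g _
    rw [← Finset.mul_sum, sum_c hm g]
    split_ifs <;> simp
  rw [Finset.sum_congr rfl this, Finset.sum_ite_eq' Q.coeff.support 0
    (fun g => Q.coeff g * ∏ i, (m i : ℂ))]
  split_ifs with h0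
  · ring
  · rw [Finsupp.notMem_support_iff.mp h0]
    ring

lemma abs_phi_le [∀ i, NeZero (m i)] (j : ∀ i : Fin h, Fin (m i))
    (Q : AddMonoidAlgebra ℂ (∀ i : Fin h, ZMod (m i))) :
    ‖phi j Q‖ ≤ ∑ g ∈ Q.coeff.support, ‖Q.coeff g‖ := by
  rw [phi_apply]
  refine le_trans (norm_sum_le _ _) ?_
  refine Finset.sum_le_sum fun g _ => ?_
  rw [norm_mul]
  have : ‖c j g‖ = 1 := by
    unfold c
    rw [norm_prod]
    exact Finset.prod_eq_one fun i _ => abs_exp_eq_one (m i) (j i) ((g i).val)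
  rw [this, mul_one]

end MahlerAux

open MahlerAux in
/-- For `Γ = ℤ/m_1ℤ × ⋯ × ℤ/m_hℤ` and `P ∈ ℂ[Γ]`, with `|λ| · l₁(P) < 1`,
`exp(-|Γ| · ∑_{n≥1} a_n λ^n / n)` equals the product over all character
evaluations `∏_j (1 - λ P(ξ_{m_1}^{j_1}, …, ξ_{m_h}^{j_h}))`. -/
theorem exp_mahler_eq_prod_roots_of_unity (h : ℕ) (m : Fin h → ℕ)
    (hm : ∀ i, 1 ≤ m i)
    (P : AddMonoidAlgebra ℂ (∀ i : Fin h, ZMod (m i)))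
    (a : ℕ → ℂ) (ha : ∀ n, a n = (P ^ n).coeff 0)
    (lam : ℂ) (hl : ‖lam‖ * ∑ g ∈ P.coeff.support, ‖P.coeff g‖ < 1) :
    Complex.exp (-(∏ i, (m i : ℂ)) * ∑' n : ℕ, a (n + 1) * lam ^ (n + 1) / (n + 1)) =
      ∏ j : ∀ i : Fin h, Fin (m i),
        (1 - lam * ∑ g ∈ P.coeff.support,
          P.coeff g * ∏ i, Complex.exp
            (2 * π * Complex.I * (j i : ℂ) * ((g i).val : ℂ) / (m i : ℂ))) := by
  haveI : ∀ i, NeZero (m i) := fun i => ⟨by have := hm i; omega⟩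
  set N : ℂ := ∏ i, (m i : ℂ) with hN
  have hN0 : N ≠ 0 := by
    rw [hN]
    exact Finset.prod_ne_zero_iff.mpr fun i _ => Nat.cast_ne_zero.mpr (NeZero.ne (m i))
  set z : (∀ i : Fin h, Fin (m i)) → ℂ := fun j => lam * phi j P with hz
  -- norm bound
  have hz1 : ∀ j, ‖z j‖ < 1 := by
    intro j
    rw [hz]
    simp only
    rw [norm_mul]
    calc ‖lam‖ * ‖phi j P‖
        ≤ ‖lam‖ * ∑ g ∈ P.coeff.support, ‖P.coeff g‖ :=
          mul_le_mul_of_nonneg_left (abs_phi_le j P) (norm_nonneg _)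
      _ < 1 := hl
  -- log series for each j
  have hlog : ∀ j, HasSum (fun n : ℕ => (z j) ^ (n + 1) / (n + 1))
      (-Complex.log (1 - z j)) := by
    intro j
    have h1 := Complex.hasSum_taylorSeries_neg_log (hz1 j)
    have h2 := (hasSum_nat_add_iff' (f := fun n : ℕ => (z j) ^ n / n) 1).mpr h1
    simpa using h2
  -- coefficient identity
  have hcoef : ∀ n : ℕ, a (n + 1) * lam ^ (n + 1) / (n + 1)
      = N⁻¹ * ∑ j : ∀ i : Fin h, Fin (m i), (z j) ^ (n + 1) / (n + 1) := by
    intro n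
    have hk : ∑ j : ∀ i : Fin h, Fin (m i), (phi j P) ^ (n + 1) = N * (P ^ (n + 1)).coeff 0 := by
      have := key hm (P ^ (n + 1))
      simpa only [map_pow] using this
    have : ∑ j : ∀ i : Fin h, Fin (m i), (z j) ^ (n + 1) / (n + 1)
        = (lam ^ (n + 1) / (n + 1)) * ∑ j : ∀ i : Fin h, Fin (m i), (phi j P) ^ (n + 1) := by
      rw [Finset.mul_sum]
      refine Finset.sum_congr rfl fun j _ => ?_
      rw [hz]
      simp only
      rw [mul_pow]
      ring
    rw [this, hk, ha]
    have hn1 : ((n : ℂ) + 1) ≠ 0 := Nat.cast_add_one_ne_zero n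
    field_simp
  -- sum over j
  have hsumj : HasSum (fun n : ℕ => a (n + 1) * lam ^ (n + 1) / (n + 1))
      (N⁻¹ * ∑ j : ∀ i : Fin h, Fin (m i), -Complex.log (1 - z j)) := by
    have := (hasSum_sum (f := fun (j : ∀ i : Fin h, Fin (m i)) (n : ℕ) => (z j) ^ (n + 1) / (n + 1))
      (s := Finset.univ) (a := fun j => -Complex.log (1 - z j)) (fun j _ => hlog j)).mul_left N⁻¹
    rw [show (fun n : ℕ => a (n + 1) * lam ^ (n + 1) / (n + 1)) = _ from funext hcoef]
    exact this
  rw [hsumj.tsum_eq]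
  have hne : ∀ j : ∀ i : Fin h, Fin (m i), 1 - z j ≠ 0 := by
    intro j hE
    have : z j = 1 := by linear_combination -hE
    have h1 := hz1 j
    rw [this] at h1
    simp at h1
  have harg : -N * (N⁻¹ * ∑ j : ∀ i : Fin h, Fin (m i), -Complex.log (1 - z j))
      = ∑ j : ∀ i : Fin h, Fin (m i), Complex.log (1 - z j) := by
    rw [← mul_assoc, neg_mul, mul_inv_cancel₀ hN0]
    simp
  rw [harg, Complex.exp_sum]
  refine Finset.prod_congr rfl fun j _ => ?_
  rw [Complex.exp_log (hne j)]
  rw [hz]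
  simp only [phi_apply]
  rfl
end

section
/- For every n ∈ ℕ, the following identity of natural numbers holds: ∑_{i + j + k = n} (2n)! / ( (i!)² (j!)² (k!)² ) = binom(2n, n) · ∑_{i + j + k = n} ( n! / (i! j! k!) )², where both sums are over triples (i,j,k) of nonnegative integers with i + j + k = n. Equivalently, [P_3^{2n}]_0 = binom(2n,n) · [Q_3^n]_0, relating the closed-walk counts of the cubic lattice ℤ³ and the triangular/honeycomb polynomial Q_3 = (1+x+y)(1+x⁻¹+y⁻¹) over ℤ². -/
/-- `∑_{i+j+k=n} (2n)!/((i!)²(j!)²(k!)²) = C(2n,n) · ∑_{i+j+k=n} (n!/(i!j!k!))²`,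
relating closed-walk counts of the cubic lattice and the honeycomb polynomial. -/
theorem cubic_eq_choose_mul_triangular (n : ℕ) :
    ∑ j ∈ Finset.Nat.antidiagonalTuple 3 n,
        ((2 * n).factorial : ℚ) / ∏ i, ((j i).factorial : ℚ) ^ 2 =
      ((2 * n).choose n : ℚ) *
        ∑ j ∈ Finset.Nat.antidiagonalTuple 3 n,
          ((n.factorial : ℚ) / ∏ i, ((j i).factorial : ℚ)) ^ 2 := by
  rw [Finset.mul_sum]
  refine Finset.sum_congr rfl fun j _ => ?_
  have hkey : ((2 * n).factorial : ℚ) = ((2 * n).choose n : ℚ) * (n.factorial : ℚ) ^ 2 := by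
    have h := Nat.choose_mul_factorial_mul_factorial (Nat.le_mul_of_pos_left n two_pos)
    have h2 : 2 * n - n = n := by omega
    rw [h2] at h
    push_cast [← h]
    ring
  have hne : ∀ i : Fin 3, ((j i).factorial : ℚ) ≠ 0 := fun i => by
    exact_mod_cast (j i).factorial_ne_zero
  rw [hkey, div_pow, ← Finset.prod_pow]
  field_simp
end

section
/- For every n ∈ ℕ, the following identity holds: ∑_{i + j + k = n} ( n! / (i! j! k!) )² = ∑_{k=0}^{n} binom(n, k)² · binom(2k, k), where the left sum is over triples (i,j,k) of nonnegative integers with i + j + k = n. Equivalently, the constant coefficient of Q_3^n = ((1+x+y)(1+x⁻¹+y⁻¹))^n in ℂ[ℤ²] equals ∑_{k=0}^{n} binom(n,k)² binom(2k,k). -/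
open Finset

private lemma cast_div_fact (a c d : ℕ) :
    ((a + (c + d)).factorial : ℚ) /
        ((a.factorial : ℚ) * ((c.factorial : ℚ) * (d.factorial : ℚ))) =
      ((a + (c + d)).choose a : ℚ) * ((c + d).choose c : ℚ) := by
  have h1 : (a + (c + d)).choose (c + d) * a.factorial * (c + d).factorial
      = (a + (c + d)).factorial := Nat.add_choose_mul_factorial_mul_factorial a (c + d)
  have h2 : (c + d).choose d * c.factorial * d.factorial = (c + d).factorial :=
    Nat.add_choose_mul_factorial_mul_factorial c d
  have ha : (a.factorial : ℚ) ≠ 0 := by exact_mod_cast a.factorial_ne_zero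
  have hc : (c.factorial : ℚ) ≠ 0 := by exact_mod_cast c.factorial_ne_zero
  have hd : (d.factorial : ℚ) ≠ 0 := by exact_mod_cast d.factorial_ne_zero
  rw [div_eq_iff (by positivity), Nat.choose_symm_add, Nat.choose_symm_add]
  push_cast [← h1, ← h2]
  ring

private lemma choose_sq_sum (b : ℕ) :
    ∑ q ∈ Finset.HasAntidiagonal.antidiagonal b, ((b.choose q.1 : ℚ)) ^ 2 = ((2 * b).choose b : ℚ) := by
  have h := Nat.add_choose_eq b b b
  rw [two_mul]
  rw [h]
  push_cast
  refine Finset.sum_congr rfl fun q hq => ?_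
  rw [Finset.HasAntidiagonal.mem_antidiagonal] at hq
  have : b.choose q.2 = b.choose q.1 := by rw [← hq]; exact Nat.choose_symm_add.symm
  rw [this]; ring

/-- `∑_{i+j+k=n} (n!/(i!j!k!))² = ∑_{k=0}^{n} C(n,k)² C(2k,k)`. -/
theorem multinomial_sq_sum_eq (n : ℕ) :
    ∑ j ∈ Finset.Nat.antidiagonalTuple 3 n,
        ((n.factorial : ℚ) / ∏ i, ((j i).factorial : ℚ)) ^ 2 =
      ∑ k ∈ Finset.range (n + 1),
        ((n.choose k : ℚ)) ^ 2 * ((2 * k).choose k : ℚ) := by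
  have hbij :
      ∑ j ∈ Finset.Nat.antidiagonalTuple 3 n,
          ((n.factorial : ℚ) / ∏ i, ((j i).factorial : ℚ)) ^ 2 =
        ∑ y ∈ (Finset.HasAntidiagonal.antidiagonal n).sigma (fun p => Finset.HasAntidiagonal.antidiagonal p.2),
          ((n.factorial : ℚ) /
            ((y.1.1.factorial : ℚ) * ((y.2.1.factorial : ℚ) * (y.2.2.factorial : ℚ)))) ^ 2 := by
    refine Finset.sum_nbij' (i := fun x => ⟨(x 0, x 1 + x 2), (x 1, x 2)⟩)
      (j := fun y => ![y.1.1, y.2.1, y.2.2]) ?_ ?_ ?_ ?_ ?_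
    · intro x hx
      rw [Finset.Nat.mem_antidiagonalTuple] at hx
      simp [Finset.mem_sigma, Finset.HasAntidiagonal.mem_antidiagonal, ← hx, Fin.sum_univ_three, add_assoc]
    · intro y hy
      rw [Finset.mem_sigma] at hy
      rw [Finset.Nat.mem_antidiagonalTuple, Fin.sum_univ_three]
      simp only [Matrix.cons_val_zero, Matrix.cons_val_one, Matrix.head_cons,
        Matrix.cons_val_two, Matrix.tail_cons]
      have h1 := Finset.HasAntidiagonal.mem_antidiagonal.mp hy.1
      have h2 := Finset.HasAntidiagonal.mem_antidiagonal.mp hy.2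
      omega
    · intro x hx
      funext i
      fin_cases i <;> simp
    · intro y hy
      simp only [Finset.mem_sigma, Finset.HasAntidiagonal.mem_antidiagonal] at hy
      obtain ⟨⟨a, b⟩, c, d⟩ := y
      simp_all
    · intro x hx
      rw [Fin.prod_univ_three, mul_assoc]
  rw [hbij, Finset.sum_sigma]
  have hinner : ∀ p ∈ Finset.HasAntidiagonal.antidiagonal n,
      (∑ q ∈ Finset.HasAntidiagonal.antidiagonal p.2,
        ((n.factorial : ℚ) /
          ((p.1.factorial : ℚ) * ((q.1.factorial : ℚ) * (q.2.factorial : ℚ)))) ^ 2)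
      = ((n.choose p.2 : ℚ)) ^ 2 * ((2 * p.2).choose p.2 : ℚ) := by
    intro p hp
    rw [Finset.HasAntidiagonal.mem_antidiagonal] at hp
    have : ∀ q ∈ Finset.HasAntidiagonal.antidiagonal p.2,
        ((n.factorial : ℚ) /
          ((p.1.factorial : ℚ) * ((q.1.factorial : ℚ) * (q.2.factorial : ℚ)))) ^ 2
        = ((n.choose p.2 : ℚ)) ^ 2 * ((p.2.choose q.1 : ℚ)) ^ 2 := by
      intro q hq
      rw [Finset.HasAntidiagonal.mem_antidiagonal] at hq
      have hn : n = p.1 + (q.1 + q.2) := by rw [hq, hp]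
      rw [hn, cast_div_fact, mul_pow, hq]
      congr 2
      rw [← hq, ← hn, ← hp, Nat.choose_symm_add, hq]
    rw [Finset.sum_congr rfl this, ← Finset.mul_sum, choose_sq_sum]
  rw [Finset.sum_congr rfl hinner, Finset.Nat.antidiagonal_eq_map', Finset.sum_map]
  rfl
end

section
/- Define a_n = ∑_{k=0}^{n} binom(n, k)² · binom(2k, k) for n ∈ ℕ. Then a_0 = 1, a_1 = 3, and for all n ≥ 2 the recurrence n² · a_n − (10n² − 10n + 3) · a_{n−1} + 9(n−1)² · a_{n−2} = 0 holds. -/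
/-- `(n+1) * C(n,k) = C(n+1,k) * (n+1-k)` in `ℤ`, valid for all `k`. -/
lemma honey_lemA (n k : ℕ) :
    ((n : ℤ) + 1) * (n.choose k : ℤ) = ((n + 1).choose k : ℤ) * ((n : ℤ) + 1 - k) := by
  rcases le_or_gt k (n + 1) with h | h
  · have := Nat.choose_mul_succ_eq n k
    have hc : ((n + 1 - k : ℕ) : ℤ) = (n : ℤ) + 1 - k := by
      push_cast [Nat.cast_sub h]; ring
    calc ((n : ℤ) + 1) * (n.choose k : ℤ) = ((n.choose k * (n + 1) : ℕ) : ℤ) := by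
          push_cast; ring
      _ = (((n + 1).choose k * (n + 1 - k) : ℕ) : ℤ) := by rw [this]
      _ = ((n + 1).choose k : ℤ) * ((n : ℤ) + 1 - k) := by push_cast [hc]; ring
  · rw [Nat.choose_eq_zero_of_lt (by omega), Nat.choose_eq_zero_of_lt (by omega)]
    simp

/-- `(k+1) * C(n,k+1) = (n-k) * C(n,k)` in `ℤ`, valid for all `k`. -/
lemma honey_lemB (n k : ℕ) :
    ((k : ℤ) + 1) * (n.choose (k + 1) : ℤ) = ((n : ℤ) - k) * (n.choose k : ℤ) := by
  have h1 := Nat.add_one_mul_choose_eq n k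
  -- (n+1) * C(n,k) = C(n+1,k+1) * (k+1)
  have h2 := Nat.choose_succ_succ n k
  -- C(n+1,k+1) = C(n,k) + C(n,k+1)
  have h1' : ((n : ℤ) + 1) * (n.choose k : ℤ)
      = (((n + 1).choose (k + 1)) : ℤ) * ((k : ℤ) + 1) := by
    exact_mod_cast congrArg (Nat.cast : ℕ → ℤ) h1
  have h2' : (((n + 1).choose (k + 1)) : ℤ) = (n.choose k : ℤ) + (n.choose (k + 1) : ℤ) := by
    exact_mod_cast congrArg (Nat.cast : ℕ → ℤ) h2
  linear_combination -h1' - ((k : ℤ) + 1) * h2'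

/-- `(k+1) * C(2(k+1),k+1) = 2(2k+1) * C(2k,k)` in `ℤ`. -/
lemma honey_lemC (k : ℕ) :
    ((k : ℤ) + 1) * ((2 * (k + 1)).choose (k + 1) : ℤ)
      = 2 * (2 * (k : ℤ) + 1) * ((2 * k).choose k : ℤ) := by
  have := Nat.succ_mul_centralBinom_succ k
  simp only [Nat.centralBinom] at this
  exact_mod_cast congrArg (Nat.cast : ℕ → ℤ) this

/-- Per-`k` certificate identity (Zeilberger certificate `-k³(4n-3k)/n²`). -/
lemma honey_step (m k : ℕ) :
    ((m : ℤ) + 2) ^ 2 *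
      (((m : ℤ) + 2) ^ 2 * (((m + 2).choose k : ℤ) ^ 2 * ((2 * k).choose k : ℤ))
        - (10 * ((m : ℤ) + 2) ^ 2 - 10 * ((m : ℤ) + 2) + 3) *
            (((m + 1).choose k : ℤ) ^ 2 * ((2 * k).choose k : ℤ))
        + 9 * ((m : ℤ) + 1) ^ 2 * ((m.choose k : ℤ) ^ 2 * ((2 * k).choose k : ℤ)))
    = (k : ℤ) ^ 3 * (4 * ((m : ℤ) + 2) - 3 * k) *
        (((m + 2).choose k : ℤ) ^ 2 * ((2 * k).choose k : ℤ))
      - ((k : ℤ) + 1) ^ 3 * (4 * ((m : ℤ) + 2) - 3 * ((k : ℤ) + 1)) *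
        (((m + 2).choose (k + 1) : ℤ) ^ 2 * ((2 * (k + 1)).choose (k + 1) : ℤ)) := by
  set n : ℤ := (m : ℤ) + 2 with hn
  have h1 : n * ((m + 1).choose k : ℤ) = ((m + 2).choose k : ℤ) * (n - k) := by
    have := honey_lemA (m + 1) k
    push_cast at this ⊢; linear_combination this
  have h2 : (n - 1) * (m.choose k : ℤ) = ((m + 1).choose k : ℤ) * (n - 1 - k) := by
    have := honey_lemA m k
    push_cast at this ⊢; linear_combination this
  have h3 := honey_lemB (m + 2) k
  have h3' : ((k : ℤ) + 1) * ((m + 2).choose (k + 1) : ℤ) = (n - k) * ((m + 2).choose k : ℤ) := by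
    push_cast at h3 ⊢; linear_combination h3
  have h4 := honey_lemC k
  -- squared consequences
  have h5 : n * (n - 1) * (m.choose k : ℤ) = (n - k) * (n - 1 - k) * ((m + 2).choose k : ℤ) := by
    linear_combination n * h2 + (n - 1 - k) * h1
  have H1 : n ^ 2 * ((m + 1).choose k : ℤ) ^ 2
      = (n - k) ^ 2 * ((m + 2).choose k : ℤ) ^ 2 := by
    linear_combination (n * ((m + 1).choose k : ℤ) + ((m + 2).choose k : ℤ) * (n - k)) * h1
  have H2 : (n * (n - 1)) ^ 2 * (m.choose k : ℤ) ^ 2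
      = ((n - k) * (n - 1 - k)) ^ 2 * ((m + 2).choose k : ℤ) ^ 2 := by
    linear_combination (n * (n - 1) * (m.choose k : ℤ)
      + (n - k) * (n - 1 - k) * ((m + 2).choose k : ℤ)) * h5
  have H3 : ((k : ℤ) + 1) ^ 2 * ((m + 2).choose (k + 1) : ℤ) ^ 2
      = (n - k) ^ 2 * ((m + 2).choose k : ℤ) ^ 2 := by
    linear_combination (((k : ℤ) + 1) * ((m + 2).choose (k + 1) : ℤ)
      + (n - k) * ((m + 2).choose k : ℤ)) * h3'
  have H4 : ((k : ℤ) + 1) ^ 3 * ((m + 2).choose (k + 1) : ℤ) ^ 2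
        * ((2 * (k + 1)).choose (k + 1) : ℤ)
      = 2 * (2 * (k : ℤ) + 1) * (n - k) ^ 2 * ((m + 2).choose k : ℤ) ^ 2
        * ((2 * k).choose k : ℤ) := by
    linear_combination (((k : ℤ) + 1) * ((2 * (k + 1)).choose (k + 1) : ℤ)) * H3
      + ((n - k) ^ 2 * ((m + 2).choose k : ℤ) ^ 2) * h4
  linear_combination (-(10 * n ^ 2 - 10 * n + 3) * ((2 * k).choose k : ℤ)) * H1
    + (9 * ((2 * k).choose k : ℤ)) * H2 + (4 * n - 3 * (k:ℤ) - 3) * H4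


/-- Telescoping term `H(k) = k³(4n-3k) F(n,k)` for `n = m+2`. -/
def honeyH (m k : ℕ) : ℤ :=
  (k : ℤ) ^ 3 * (4 * ((m : ℤ) + 2) - 3 * k) *
    (((m + 2).choose k : ℤ) ^ 2 * ((2 * k).choose k : ℤ))

lemma honey_step' (m k : ℕ) :
    ((m : ℤ) + 2) ^ 2 *
      (((m : ℤ) + 2) ^ 2 * (((m + 2).choose k : ℤ) ^ 2 * ((2 * k).choose k : ℤ))
        - (10 * ((m : ℤ) + 2) ^ 2 - 10 * ((m : ℤ) + 2) + 3) *
            (((m + 1).choose k : ℤ) ^ 2 * ((2 * k).choose k : ℤ))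
        + 9 * ((m : ℤ) + 1) ^ 2 * ((m.choose k : ℤ) ^ 2 * ((2 * k).choose k : ℤ)))
    = honeyH m k - honeyH m (k + 1) := by
  rw [honey_step]
  simp only [honeyH]
  push_cast
  ring

/-- The sequence `a_n = ∑_{k=0}^n C(n,k)² C(2k,k)` satisfies
`n² a_n - (10n²-10n+3) a_{n-1} + 9(n-1)² a_{n-2} = 0` with `a_0 = 1`, `a_1 = 3`. -/
theorem honeycomb_recurrence (a : ℕ → ℤ)
    (ha : ∀ n, a n = ∑ k ∈ Finset.range (n + 1),
      (n.choose k : ℤ) ^ 2 * ((2 * k).choose k : ℤ)) :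
    a 0 = 1 ∧ a 1 = 3 ∧
    ∀ n : ℕ, 2 ≤ n →
      (n : ℤ) ^ 2 * a n - (10 * (n : ℤ) ^ 2 - 10 * (n : ℤ) + 3) * a (n - 1)
      + 9 * ((n : ℤ) - 1) ^ 2 * a (n - 2) = 0 := by
  refine ⟨by rw [ha]; simp, by rw [ha]; simp [Finset.sum_range_succ], ?_⟩
  intro n hn
  obtain ⟨m, rfl⟩ : ∃ m, n = m + 2 := ⟨n - 2, by omega⟩
  have e1 : m + 2 - 1 = m + 1 := rfl
  have e2 : m + 2 - 2 = m := rfl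
  rw [e1, e2, ha, ha, ha]
  have z1 : (m + 1).choose (m + 2) = 0 := Nat.choose_eq_zero_of_lt (by omega)
  have z2 : m.choose (m + 1) = 0 := Nat.choose_eq_zero_of_lt (by omega)
  have z3 : m.choose (m + 2) = 0 := Nat.choose_eq_zero_of_lt (by omega)
  have ext1 : (∑ k ∈ Finset.range (m + 2), ((m + 1).choose k : ℤ) ^ 2 * ((2 * k).choose k : ℤ))
      = ∑ k ∈ Finset.range (m + 3), ((m + 1).choose k : ℤ) ^ 2 * ((2 * k).choose k : ℤ) := by
    rw [eq_comm, Finset.sum_range_succ, z1]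
    simp
  have ext2 : (∑ k ∈ Finset.range (m + 1), (m.choose k : ℤ) ^ 2 * ((2 * k).choose k : ℤ))
      = ∑ k ∈ Finset.range (m + 3), (m.choose k : ℤ) ^ 2 * ((2 * k).choose k : ℤ) := by
    rw [eq_comm, Finset.sum_range_succ, Finset.sum_range_succ, z2, z3]
    simp
  rw [ext1, ext2]
  have hne : ((m : ℤ) + 2) ^ 2 ≠ 0 := by positivity
  refine (mul_eq_zero.mp ?_).resolve_left hne
  have e3 : m + 2 + 1 = m + 3 := rfl
  rw [e3]
  have z4 : (m + 2).choose (m + 3) = 0 := Nat.choose_eq_zero_of_lt (by omega)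
  have tele : ∑ k ∈ Finset.range (m + 3), (honeyH m k - honeyH m (k + 1)) = 0 := by
    rw [Finset.sum_range_sub' (honeyH m)]
    simp [honeyH, z4]
  have hc : (∑ k ∈ Finset.range (m + 3), ((m : ℤ) + 2) ^ 2 *
      (((m : ℤ) + 2) ^ 2 * (((m + 2).choose k : ℤ) ^ 2 * ((2 * k).choose k : ℤ))
        - (10 * ((m : ℤ) + 2) ^ 2 - 10 * ((m : ℤ) + 2) + 3) *
            (((m + 1).choose k : ℤ) ^ 2 * ((2 * k).choose k : ℤ))
        + 9 * ((m : ℤ) + 1) ^ 2 * ((m.choose k : ℤ) ^ 2 * ((2 * k).choose k : ℤ))))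
      = ∑ k ∈ Finset.range (m + 3), (honeyH m k - honeyH m (k + 1)) :=
    Finset.sum_congr rfl fun k _ => honey_step' m k
  rw [← tele, ← hc]
  simp only [mul_sub, mul_add, Finset.sum_add_distrib, Finset.sum_sub_distrib, ← Finset.mul_sum]
  push_cast
  ring
end

section
/- Define A_n = binom(2n, n) · ∑_{k=0}^{n} binom(n, k)² · binom(2k, k) for n ∈ ℕ (so A_n is the number of closed circuits of length 2n at the origin of the cubic lattice ℤ³). Then A_0 = 1, A_1 = 6, A_2 = 90, and for all n ≥ 2 the recurrence n³ · A_n − 2(2n−1)(10n² − 10n + 3) · A_{n−1} + 36(2n−1)(n−1)(2n−3) · A_{n−2} = 0 holds. -/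
private def gg (m : ℕ) : ℕ → ℤ
  | 0 => 0
  | (k+1) => -2 * (2*(k:ℤ)+1) * (4*(m:ℤ)+5-3*(k:ℤ)) * (((m+1).choose k : ℤ))^2
      * (((2*k).choose k : ℤ))

private lemma cb_step (j : ℕ) :
    ((j:ℤ)+1) * ((2*(j+1)).choose (j+1) : ℤ) = 2*(2*(j:ℤ)+1) * ((2*j).choose j : ℤ) := by
  have h := Nat.succ_mul_centralBinom_succ j
  have h2 : (j+1) * ((2*(j+1)).choose (j+1)) = 2*(2*j+1) * ((2*j).choose j) := h
  exact_mod_cast h2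

private lemma hterm (m k : ℕ) :
    ((m:ℤ)+2)^2 * (((m+2).choose k : ℤ)^2 * ((2*k).choose k : ℤ))
    - (10*((m:ℤ)+2)^2 - 10*((m:ℤ)+2) + 3) * (((m+1).choose k : ℤ)^2 * ((2*k).choose k : ℤ))
    + 9*((m:ℤ)+1)^2 * ((m.choose k : ℤ)^2 * ((2*k).choose k : ℤ))
    = gg m (k+1) - gg m k := by
  match k with
  | 0 => simp [gg]; ring
  | (j+1) =>
    show _ = gg m (j+2) - gg m (j+1)
    simp only [gg]
    -- main identity
    rcases le_or_gt j m with hj | hj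
    · -- j ≤ m : work in ℚ
      have hj1 : ((j:ℚ)+1) ≠ 0 := by positivity
      have hs : ((m:ℚ)+1-(j:ℚ)) ≠ 0 := by
        have : (j:ℚ) ≤ (m:ℚ) := by exact_mod_cast hj
        intro h; nlinarith
      have e1 : (((m+2).choose (j+1) : ℚ)) = ((m:ℚ)+2) * ((m+1).choose j : ℚ) / ((j:ℚ)+1) := by
        rw [eq_div_iff hj1]
        have h := Nat.add_one_mul_choose_eq (m+1) j
        simp only [Nat.succ_eq_add_one, show m+1+1 = m+2 from rfl] at h
        have h2 : ((m+2).choose (j+1)) * (j+1) = (m+2) * ((m+1).choose j) := by omega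
        exact_mod_cast h2
      have e2 : (((m+1).choose (j+1) : ℚ)) = ((m:ℚ)+1) * (m.choose j : ℚ) / ((j:ℚ)+1) := by
        rw [eq_div_iff hj1]
        have h := Nat.add_one_mul_choose_eq m j
        have h2 : ((m+1).choose (j+1)) * (j+1) = (m+1) * (m.choose j) := by omega
        exact_mod_cast h2
      have e3 : ((m.choose (j+1) : ℚ)) = ((m:ℚ)-(j:ℚ)) * (m.choose j : ℚ) / ((j:ℚ)+1) := by
        rw [eq_div_iff hj1]
        have h2 := Nat.choose_succ_right_eq m j
        have h3 : ((m.choose (j+1) : ℚ)) * ((j:ℚ)+1) = (m.choose j : ℚ) * ((m-j : ℕ) : ℚ) := by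
          exact_mod_cast h2
        rw [h3, Nat.cast_sub hj]; ring
      have e4 : (((2*(j+1)).choose (j+1) : ℚ)) = 2*(2*(j:ℚ)+1) * ((2*j).choose j : ℚ) / ((j:ℚ)+1) := by
        rw [eq_div_iff hj1]
        have h : ((j:ℚ)+1) * ((2*(j+1)).choose (j+1) : ℚ)
            = 2*(2*(j:ℚ)+1) * ((2*j).choose j : ℚ) := by exact_mod_cast cb_step j
        linear_combination h
      have e5 : (((m+1).choose j : ℚ)) = ((m:ℚ)+1) * (m.choose j : ℚ) / ((m:ℚ)+1-(j:ℚ)) := by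
        rw [eq_div_iff hs]
        have h1 := Nat.add_one_mul_choose_eq m j
        have h2 := Nat.choose_succ_right_eq (m+1) j
        have h3 : ((m+1).choose j) * (m+1-j) = (m+1) * (m.choose j) := by omega
        have h4 : (((m+1).choose j : ℚ)) * (((m+1-j : ℕ)) : ℚ) = ((m:ℚ)+1) * (m.choose j : ℚ) := by
          exact_mod_cast h3
        rw [Nat.cast_sub (by omega)] at h4
        push_cast at h4
        linear_combination h4
      have goalQ : ((m:ℚ)+2)^2 * (((m+2).choose (j+1) : ℚ)^2 * ((2*(j+1)).choose (j+1) : ℚ))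
          - (10*((m:ℚ)+2)^2 - 10*((m:ℚ)+2) + 3) * (((m+1).choose (j+1) : ℚ)^2 * ((2*(j+1)).choose (j+1) : ℚ))
          + 9*((m:ℚ)+1)^2 * ((m.choose (j+1) : ℚ)^2 * ((2*(j+1)).choose (j+1) : ℚ))
          = -2 * (2*((j:ℚ)+1)+1) * (4*(m:ℚ)+5-3*((j:ℚ)+1)) * (((m+1).choose (j+1) : ℚ))^2
              * (((2*(j+1)).choose (j+1) : ℚ))
            - (-2 * (2*(j:ℚ)+1) * (4*(m:ℚ)+5-3*(j:ℚ)) * (((m+1).choose j : ℚ))^2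
              * (((2*j).choose j : ℚ))) := by
        rw [e1, e2, e3, e4, e5]
        field_simp
        ring
      push_cast
      push_cast at goalQ
      exact_mod_cast goalQ
    · -- j > m
      rcases eq_or_lt_of_le (Nat.succ_le_of_lt hj) with hj2 | hj2
      · -- j = m+1
        subst hj2
        have h : ((m:ℤ)+2) * ((2*(m+1+1)).choose (m+1+1) : ℤ)
            = 2*(2*((m:ℤ)+1)+1) * ((2*(m+1)).choose (m+1) : ℤ) := by
          have := cb_step (m+1)
          push_cast at this ⊢
          linear_combination this
        have h1 : (m+1).choose (m+1+1) = 0 := Nat.choose_eq_zero_of_lt (by omega)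
        have h2 : m.choose (m+1+1) = 0 := Nat.choose_eq_zero_of_lt (by omega)
        simp only [h1, h2, Nat.choose_self]
        push_cast
        push_cast at h
        linear_combination ((m:ℤ)+2) * h
      · -- j ≥ m+2
        have h1 : (m+2).choose (j+1) = 0 := Nat.choose_eq_zero_of_lt (by omega)
        have h2 : (m+1).choose (j+1) = 0 := Nat.choose_eq_zero_of_lt (by omega)
        have h3 : m.choose (j+1) = 0 := Nat.choose_eq_zero_of_lt (by omega)
        have h4 : (m+1).choose j = 0 := Nat.choose_eq_zero_of_lt (by omega)
        simp [h1, h2, h3, h4]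


private def SS (n : ℕ) : ℤ :=
  ∑ k ∈ Finset.range (n + 1), (n.choose k : ℤ) ^ 2 * ((2 * k).choose k : ℤ)

private lemma key (m : ℕ) :
    ((m:ℤ)+2)^2 * SS (m+2)
      = (10*((m:ℤ)+2)^2 - 10*((m:ℤ)+2) + 3) * SS (m+1) - 9*((m:ℤ)+1)^2 * SS m := by
  have h1 : SS (m+1) = ∑ k ∈ Finset.range (m+3),
      ((m+1).choose k : ℤ)^2 * ((2*k).choose k : ℤ) := by
    rw [show m+3 = (m+2)+1 from rfl, Finset.sum_range_succ,
      Nat.choose_eq_zero_of_lt (show m+1 < m+2 by omega)]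
    simp [SS]
  have h2 : SS m = ∑ k ∈ Finset.range (m+3),
      (m.choose k : ℤ)^2 * ((2*k).choose k : ℤ) := by
    rw [show m+3 = (m+2)+1 from rfl, Finset.sum_range_succ,
      Nat.choose_eq_zero_of_lt (show m < m+2 by omega),
      show m+2 = (m+1)+1 from rfl, Finset.sum_range_succ,
      Nat.choose_eq_zero_of_lt (show m < m+1 by omega)]
    simp [SS]
  have h0 : SS (m+2) = ∑ k ∈ Finset.range (m+3),
      ((m+2).choose k : ℤ)^2 * ((2*k).choose k : ℤ) := rfl
  have expand : ((m:ℤ)+2)^2 * SS (m+2)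
      - (10*((m:ℤ)+2)^2 - 10*((m:ℤ)+2) + 3) * SS (m+1)
      + 9*((m:ℤ)+1)^2 * SS m
      = ∑ k ∈ Finset.range (m+3), (gg m (k+1) - gg m k) := by
    rw [h0, h1, h2, Finset.mul_sum, Finset.mul_sum, Finset.mul_sum,
      ← Finset.sum_sub_distrib, ← Finset.sum_add_distrib]
    exact Finset.sum_congr rfl fun k _ => hterm m k
  rw [Finset.sum_range_sub (gg m) (m+3)] at expand
  have hz : gg m (m+3) = 0 := by
    show gg m ((m+2)+1) = 0
    simp [gg, Nat.choose_eq_zero_of_lt (show m+1 < m+2 by omega)]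
  rw [hz] at expand
  simp only [gg] at expand
  linarith

/-- The number `A_n = C(2n,n) ∑_{k=0}^n C(n,k)² C(2k,k)` of closed circuits of
length `2n` in the cubic lattice satisfies
`n³ A_n - 2(2n-1)(10n²-10n+3) A_{n-1} + 36(2n-1)(n-1)(2n-3) A_{n-2} = 0`. -/
theorem cubic_lattice_recurrence (A : ℕ → ℤ)
    (hA : ∀ n, A n = ((2 * n).choose n : ℤ) * ∑ k ∈ Finset.range (n + 1),
      (n.choose k : ℤ) ^ 2 * ((2 * k).choose k : ℤ)) :
    A 0 = 1 ∧ A 1 = 6 ∧ A 2 = 90 ∧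
    ∀ n : ℕ, 2 ≤ n →
      (n : ℤ) ^ 3 * A n
      - 2 * (2 * (n : ℤ) - 1) * (10 * (n : ℤ) ^ 2 - 10 * (n : ℤ) + 3) * A (n - 1)
      + 36 * (2 * (n : ℤ) - 1) * ((n : ℤ) - 1) * (2 * (n : ℤ) - 3) * A (n - 2) = 0 := by
  have hA' : ∀ n, A n = ((2 * n).choose n : ℤ) * SS n := hA
  refine ⟨by rw [hA']; decide, by rw [hA']; decide, by rw [hA']; decide, ?_⟩
  intro n hn
  obtain ⟨m, rfl⟩ : ∃ m, n = m + 2 := ⟨n - 2, by omega⟩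
  rw [show m+2-1 = m+1 from rfl, show m+2-2 = m from rfl, hA' (m+2), hA' (m+1), hA' m]
  have hc1 : ((m:ℤ)+2) * ((2*(m+2)).choose (m+2) : ℤ)
      = 2*(2*((m:ℤ)+2)-1) * ((2*(m+1)).choose (m+1) : ℤ) := by
    have := cb_step (m+1)
    push_cast at this ⊢
    linear_combination this
  have hc2 : ((m:ℤ)+1) * ((2*(m+1)).choose (m+1) : ℤ)
      = 2*(2*((m:ℤ)+2)-3) * ((2*m).choose m : ℤ) := by
    have := cb_step m
    push_cast at this ⊢
    linear_combination this
  have hk := key m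
  push_cast
  linear_combination (((m:ℤ)+2) * ((2*(m+2)).choose (m+2) : ℤ)) * hk
    + ((10*((m:ℤ)+2)^2 - 10*((m:ℤ)+2) + 3) * SS (m+1) - 9*((m:ℤ)+1)^2 * SS m) * hc1
    - (18*(2*((m:ℤ)+2)-1)*((m:ℤ)+1) * SS m) * hc2
end

section
/- Define a_n = ∑_{k=0}^{n} binom(n, k)² · binom(2k, k) and b_n = ∑_{j=0}^{n} binom(n, j) · (−3)^{n−j} · a_j for n ∈ ℕ (so b_n counts the closed circuits of length n based at a fixed vertex of the triangular lattice). Then b_0 = 1, b_1 = 0, b_2 = 6, and for all n ≥ 3 the recurrence n² · b_n − n(n−1) · b_{n−1} − 24(n−1)² · b_{n−2} − 36(n−2)(n−1) · b_{n−3} = 0 holds. -/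
/-- WZ certificate function. -/
def Hc (s k : ℕ) : ℤ :=
  -((k : ℤ) ^ 3 * (4 * (s : ℤ) + 8 - 3 * (k : ℤ)) * ((s + 2).choose k : ℤ) ^ 2
      * ((2 * k).choose k : ℤ))

lemma wz (s k : ℕ) :
    ((s : ℤ) + 2) ^ 2 * (((s : ℤ) + 2) ^ 2 * ((s + 2).choose k : ℤ) ^ 2 * ((2 * k).choose k : ℤ)
      - (10 * ((s : ℤ) + 2) ^ 2 - 10 * ((s : ℤ) + 2) + 3) * ((s + 1).choose k : ℤ) ^ 2
          * ((2 * k).choose k : ℤ)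
      + 9 * ((s : ℤ) + 1) ^ 2 * (s.choose k : ℤ) ^ 2 * ((2 * k).choose k : ℤ))
    = Hc s (k + 1) - Hc s k := by
  unfold Hc
  rcases Nat.lt_or_ge s k with hk | hk
  · -- k ≥ s + 1
    have : k = s + 1 ∨ k = s + 2 ∨ s + 3 ≤ k := by omega
    rcases this with rfl | rfl | hk3
    · -- k = s + 1
      have e1 : s + 1 + 1 = s + 2 := rfl
      rw [e1]
      have hz : ((s : ℤ) + 2) * ((2 * (s + 2)).choose (s + 2) : ℤ)
          = 2 * (2 * ((s : ℤ) + 1) + 1) * ((2 * (s + 1)).choose (s + 1) : ℤ) := by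
        have h := Nat.succ_mul_centralBinom_succ (s + 1)
        rw [Nat.centralBinom_eq_two_mul_choose, Nat.centralBinom_eq_two_mul_choose] at h
        rw [(rfl : s + 1 + 1 = s + 2)] at h
        exact_mod_cast h
      simp only [Nat.choose_succ_self_right, Nat.choose_self,
        Nat.choose_eq_zero_of_lt (Nat.lt_succ_self s)]
      push_cast
      linear_combination ((s : ℤ) + 2) ^ 3 * hz
    · -- k = s + 2
      simp only [Nat.choose_self, Nat.choose_eq_zero_of_lt (by omega : s + 1 < s + 2),
        Nat.choose_eq_zero_of_lt (by omega : s < s + 2),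
        Nat.choose_eq_zero_of_lt (by omega : s + 2 < s + 2 + 1)]
      push_cast
      ring
    · -- k ≥ s + 3
      rw [Nat.choose_eq_zero_of_lt (by omega : s + 2 < k),
        Nat.choose_eq_zero_of_lt (by omega : s + 1 < k),
        Nat.choose_eq_zero_of_lt (by omega : s < k),
        Nat.choose_eq_zero_of_lt (by omega : s + 2 < k + 1)]
      push_cast
      ring
  · -- main case : k ≤ s
    obtain ⟨r, rfl⟩ : ∃ r, s = k + r := ⟨s - k, by omega⟩
    have hr1 : ((r : ℚ) + 1) ≠ 0 := by positivity
    have hr2 : ((r : ℚ) + 2) ≠ 0 := by positivity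
    have hk1 : ((k : ℚ) + 1) ≠ 0 := by positivity
    have he1 : (((k + r + 1).choose k : ℚ)) =
        ((k : ℚ) + r + 1) * ((k + r).choose k : ℚ) / ((r : ℚ) + 1) := by
      rw [eq_div_iff hr1]
      have h := Nat.choose_mul_succ_eq (k + r) k
      rw [show k + r + 1 - k = r + 1 by omega] at h
      have h2 : ((k + r).choose k : ℚ) * ((k : ℚ) + r + 1)
          = ((k + r + 1).choose k : ℚ) * ((r : ℚ) + 1) := by exact_mod_cast h
      linear_combination -h2
    have he2 : (((k + r + 2).choose k : ℚ)) =
        ((k : ℚ) + r + 2) * ((k + r + 1).choose k : ℚ) / ((r : ℚ) + 2) := by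
      rw [eq_div_iff hr2]
      have h := Nat.choose_mul_succ_eq (k + r + 1) k
      rw [show k + r + 1 + 1 - k = r + 2 by omega,
        (rfl : k + r + 1 + 1 = k + r + 2)] at h
      have h2 : ((k + r + 1).choose k : ℚ) * ((k : ℚ) + r + 2)
          = ((k + r + 2).choose k : ℚ) * ((r : ℚ) + 2) := by exact_mod_cast h
      linear_combination -h2
    have hw : (((k + r + 2).choose (k + 1) : ℚ)) =
        ((r : ℚ) + 2) * ((k + r + 2).choose k : ℚ) / ((k : ℚ) + 1) := by
      rw [eq_div_iff hk1]
      have h := Nat.choose_succ_right_eq (k + r + 2) k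
      rw [show k + r + 2 - k = r + 2 by omega] at h
      have h2 : ((k + r + 2).choose (k + 1) : ℚ) * ((k : ℚ) + 1)
          = ((k + r + 2).choose k : ℚ) * ((r : ℚ) + 2) := by exact_mod_cast h
      linear_combination h2
    have hzq : (((2 * (k + 1)).choose (k + 1) : ℚ)) =
        (4 * (k : ℚ) + 2) * ((2 * k).choose k : ℚ) / ((k : ℚ) + 1) := by
      rw [eq_div_iff hk1]
      have h := Nat.succ_mul_centralBinom_succ k
      rw [Nat.centralBinom_eq_two_mul_choose, Nat.centralBinom_eq_two_mul_choose] at h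
      have h2 : ((k : ℚ) + 1) * ((2 * (k + 1)).choose (k + 1) : ℚ)
          = 2 * (2 * (k : ℚ) + 1) * ((2 * k).choose k : ℚ) := by exact_mod_cast h
      linear_combination h2
    have key : ((k : ℚ) + r + 2) ^ 2 * (((k : ℚ) + r + 2) ^ 2
          * ((k + r + 2).choose k : ℚ) ^ 2 * ((2 * k).choose k : ℚ)
        - (10 * ((k : ℚ) + r + 2) ^ 2 - 10 * ((k : ℚ) + r + 2) + 3)
          * ((k + r + 1).choose k : ℚ) ^ 2 * ((2 * k).choose k : ℚ)
        + 9 * ((k : ℚ) + r + 1) ^ 2 * ((k + r).choose k : ℚ) ^ 2 * ((2 * k).choose k : ℚ))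
      = -(((k : ℚ) + 1) ^ 3 * (4 * ((k : ℚ) + r) + 8 - 3 * ((k : ℚ) + 1))
            * ((k + r + 2).choose (k + 1) : ℚ) ^ 2 * ((2 * (k + 1)).choose (k + 1) : ℚ))
        - -((k : ℚ) ^ 3 * (4 * ((k : ℚ) + r) + 8 - 3 * (k : ℚ))
            * ((k + r + 2).choose k : ℚ) ^ 2 * ((2 * k).choose k : ℚ)) := by
      rw [hw, hzq, he2, he1]
      field_simp
      ring
    exact_mod_cast key

lemma recA (a : ℕ → ℤ)
    (ha : ∀ n, a n = ∑ k ∈ Finset.range (n + 1),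
      (n.choose k : ℤ) ^ 2 * ((2 * k).choose k : ℤ)) (t : ℕ) :
    ((t : ℤ) + 1) ^ 2 * a (t + 1)
      = (10 * (t : ℤ) ^ 2 + 10 * t + 3) * a t - 9 * (t : ℤ) ^ 2 * a (t - 1) := by
  cases t with
  | zero =>
    rw [ha 1, ha 0]
    simp [Finset.sum_range_succ]
  | succ s =>
    have h2 : ∑ k ∈ Finset.range (s + 3),
        ((s + 2).choose k : ℤ) ^ 2 * ((2 * k).choose k : ℤ) = a (s + 2) := (ha (s + 2)).symm
    have h1 : ∑ k ∈ Finset.range (s + 3),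
        ((s + 1).choose k : ℤ) ^ 2 * ((2 * k).choose k : ℤ) = a (s + 1) := by
      rw [Finset.sum_range_succ, ha (s + 1),
        Nat.choose_eq_zero_of_lt (by omega : s + 1 < s + 2)]
      push_cast; ring
    have h0 : ∑ k ∈ Finset.range (s + 3),
        (s.choose k : ℤ) ^ 2 * ((2 * k).choose k : ℤ) = a s := by
      rw [Finset.sum_range_succ, Finset.sum_range_succ, ha s,
        Nat.choose_eq_zero_of_lt (by omega : s < s + 2),
        Nat.choose_eq_zero_of_lt (by omega : s < s + 1)]
      push_cast; ring
    have tele : ∑ k ∈ Finset.range (s + 3),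
        (((s : ℤ) + 2) ^ 2 * (((s : ℤ) + 2) ^ 2 * ((s + 2).choose k : ℤ) ^ 2
            * ((2 * k).choose k : ℤ)
          - (10 * ((s : ℤ) + 2) ^ 2 - 10 * ((s : ℤ) + 2) + 3) * ((s + 1).choose k : ℤ) ^ 2
              * ((2 * k).choose k : ℤ)
          + 9 * ((s : ℤ) + 1) ^ 2 * (s.choose k : ℤ) ^ 2 * ((2 * k).choose k : ℤ)))
        = Hc s (s + 3) - Hc s 0 := by
      rw [← Finset.sum_range_sub (Hc s)]
      exact Finset.sum_congr rfl fun k _ => wz s k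
    have expand : ∑ k ∈ Finset.range (s + 3),
        (((s : ℤ) + 2) ^ 2 * (((s : ℤ) + 2) ^ 2 * ((s + 2).choose k : ℤ) ^ 2
            * ((2 * k).choose k : ℤ)
          - (10 * ((s : ℤ) + 2) ^ 2 - 10 * ((s : ℤ) + 2) + 3) * ((s + 1).choose k : ℤ) ^ 2
              * ((2 * k).choose k : ℤ)
          + 9 * ((s : ℤ) + 1) ^ 2 * (s.choose k : ℤ) ^ 2 * ((2 * k).choose k : ℤ)))
        = ((s : ℤ) + 2) ^ 2 * (((s : ℤ) + 2) ^ 2 * a (s + 2)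
          - (10 * ((s : ℤ) + 2) ^ 2 - 10 * ((s : ℤ) + 2) + 3) * a (s + 1)
          + 9 * ((s : ℤ) + 1) ^ 2 * a s) := by
      rw [← h2, ← h1, ← h0]
      rw [Finset.mul_sum, Finset.mul_sum, Finset.mul_sum, ← Finset.sum_sub_distrib,
        ← Finset.sum_add_distrib, Finset.mul_sum]
      exact Finset.sum_congr rfl fun k _ => by ring
    have hz3 : Hc s (s + 3) = 0 := by
      rw [show Hc s (s+3) = -(((s:ℕ)+3 : ℤ) ^ 3 * (4 * (s : ℤ) + 8 - 3 * ((s:ℕ)+3 : ℤ)) * ((s + 2).choose (s+3) : ℤ) ^ 2 * ((2 * (s+3)).choose (s+3) : ℤ)) from rfl, Nat.choose_eq_zero_of_lt (by omega : s + 2 < s + 3)]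
      push_cast; ring
    have hz0 : Hc s 0 = 0 := by
      rw [show Hc s 0 = -(((0:ℕ) : ℤ) ^ 3 * (4 * (s : ℤ) + 8 - 3 * ((0:ℕ) : ℤ)) * ((s + 2).choose 0 : ℤ) ^ 2 * ((2 * 0).choose 0 : ℤ)) from rfl]; push_cast; ring
    have hzero : ((s : ℤ) + 2) ^ 2 * (((s : ℤ) + 2) ^ 2 * a (s + 2)
          - (10 * ((s : ℤ) + 2) ^ 2 - 10 * ((s : ℤ) + 2) + 3) * a (s + 1)
          + 9 * ((s : ℤ) + 1) ^ 2 * a s) = 0 := by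
      rw [← expand, tele, hz3, hz0]; ring
    have hne : (((s : ℤ) + 2) ^ 2) ≠ 0 := by positivity
    have hX := (mul_eq_zero.mp hzero).resolve_left hne
    have hsub : s + 1 - 1 = s := rfl
    rw [hsub]
    push_cast
    linear_combination hX


lemma lemC (m i : ℕ) :
    9 * ((m : ℤ) + 3) ^ 2 * ((m + 3).choose i : ℤ)
      + 3 * ((m : ℤ) + 3) * ((m : ℤ) + 2) * ((m + 2).choose i : ℤ)
      + 12 * ((m : ℤ) + 1) * ((m : ℤ) + 2) * (m.choose i : ℤ)
    = 24 * ((m : ℤ) + 2) ^ 2 * ((m + 1).choose i : ℤ)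
      + 9 * (i : ℤ) ^ 2 * ((m + 2).choose (i - 1) : ℤ)
      + 3 * (10 * (i : ℤ) ^ 2 + 10 * (i : ℤ) + 3) * ((m + 2).choose i : ℤ)
      + 9 * ((i : ℤ) + 1) ^ 2 * ((m + 2).choose (i + 1) : ℤ) := by
  rcases Nat.eq_zero_or_pos i with rfl | hi
  · -- i = 0
    simp [Nat.choose_one_right]
    push_cast; ring
  obtain ⟨p, rfl⟩ : ∃ p, i = p + 1 := ⟨i - 1, by omega⟩
  rw [show p + 1 - 1 = p by omega]
  rcases Nat.lt_or_ge m (p + 1) with hlt | hge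
  · -- boundary : i = p+1 > m
    have hd : m = p ∨ p = m + 1 ∨ p = m + 2 ∨ m + 3 ≤ p := by omega
    rcases hd with rfl | rfl | rfl | hbig
    · -- i = m + 1  
      rw [show m + 1 + 1 = m + 2 by omega]
      have hA : ((m + 3).choose (m + 1) : ℚ) = ((m : ℚ) + 2) * ((m : ℚ) + 3) / 2 := by
        rw [eq_div_iff (by norm_num : (2:ℚ) ≠ 0)]
        have h := Nat.choose_mul_succ_eq (m + 2) (m + 1)
        rw [show m + 2 + 1 - (m + 1) = 2 by omega, show m + 2 + 1 = m + 3 by omega,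
          Nat.choose_succ_self_right] at h
        have h2 : ((m : ℚ) + 1 + 1) * ((m : ℚ) + 2 + 1) = ((m + 3).choose (m + 1) : ℚ) * 2 := by
          exact_mod_cast h
        linear_combination -h2
      have hB : ((m + 2).choose m : ℚ) = ((m : ℚ) + 1) * ((m : ℚ) + 2) / 2 := by
        rw [eq_div_iff (by norm_num : (2:ℚ) ≠ 0)]
        have h := Nat.choose_mul_succ_eq (m + 1) m
        rw [show m + 1 + 1 - m = 2 by omega, show m + 1 + 1 = m + 2 by omega,
          Nat.choose_succ_self_right] at h
        have h2 : ((m : ℚ) + 1) * ((m : ℚ) + 1 + 1) = ((m + 2).choose m : ℚ) * 2 := by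
          exact_mod_cast h
        linear_combination -h2
      have key : 9 * ((m : ℚ) + 3) ^ 2 * ((m + 3).choose (m + 1) : ℚ)
          + 3 * ((m : ℚ) + 3) * ((m : ℚ) + 2) * ((m + 2).choose (m + 1) : ℚ)
          + 12 * ((m : ℚ) + 1) * ((m : ℚ) + 2) * (m.choose (m + 1) : ℚ)
        = 24 * ((m : ℚ) + 2) ^ 2 * ((m + 1).choose (m + 1) : ℚ)
          + 9 * ((m : ℚ) + 1) ^ 2 * ((m + 2).choose m : ℚ)
          + 3 * (10 * ((m : ℚ) + 1) ^ 2 + 10 * ((m : ℚ) + 1) + 3) * ((m + 2).choose (m + 1) : ℚ)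
          + 9 * (((m : ℚ) + 1) + 1) ^ 2 * ((m + 2).choose (m + 2) : ℚ) := by
        rw [hA, hB, Nat.choose_succ_self_right, Nat.choose_self, Nat.choose_self,
          Nat.choose_eq_zero_of_lt (by omega : m < m + 1)]
        push_cast
        field_simp
        ring
      push_cast at key ⊢
      exact_mod_cast key
    · -- i = m + 2
      rw [show m + 1 + 1 + 1 = m + 3 by omega, show m + 1 + 1 = m + 2 by omega]
      rw [Nat.choose_eq_zero_of_lt (by omega : m < m + 2),
        Nat.choose_eq_zero_of_lt (by omega : m + 1 < m + 2),
        Nat.choose_eq_zero_of_lt (by omega : m + 2 < m + 3),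
        Nat.choose_self, Nat.choose_succ_self_right,
        show (m + 2).choose (m + 1) = m + 2 from Nat.choose_succ_self_right (m + 1)]
      push_cast; ring
    · -- i = m + 3
      rw [show m + 2 + 1 + 1 = m + 4 by omega, show m + 2 + 1 = m + 3 by omega]
      rw [Nat.choose_eq_zero_of_lt (by omega : m < m + 3),
        Nat.choose_eq_zero_of_lt (by omega : m + 1 < m + 3),
        Nat.choose_eq_zero_of_lt (by omega : m + 2 < m + 3),
        Nat.choose_eq_zero_of_lt (by omega : m + 2 < m + 4),
        Nat.choose_self, show (m + 2).choose (m + 2) = 1 from Nat.choose_self (m + 2)]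
      push_cast; ring
    · -- i ≥ m + 4
      rw [Nat.choose_eq_zero_of_lt (by omega : m + 3 < p + 1),
        Nat.choose_eq_zero_of_lt (by omega : m + 2 < p + 1),
        Nat.choose_eq_zero_of_lt (by omega : m < p + 1),
        Nat.choose_eq_zero_of_lt (by omega : m + 1 < p + 1),
        Nat.choose_eq_zero_of_lt (by omega : m + 2 < p),
        Nat.choose_eq_zero_of_lt (by omega : m + 2 < p + 1 + 1)]
      push_cast; ring
  · -- main case : i = p + 1 ≤ m
    obtain ⟨r, rfl⟩ : ∃ r, m = p + 1 + r := ⟨m - (p + 1), by omega⟩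
    have hr1 : ((r : ℚ) + 1) ≠ 0 := by positivity
    have hr2 : ((r : ℚ) + 2) ≠ 0 := by positivity
    have hr3 : ((r : ℚ) + 3) ≠ 0 := by positivity
    have hp2 : ((p : ℚ) + 2) ≠ 0 := by positivity
    have hc1 : (((p + 1 + r + 1).choose (p + 1) : ℚ)) =
        ((p : ℚ) + 1 + r + 1) * ((p + 1 + r).choose (p + 1) : ℚ) / ((r : ℚ) + 1) := by
      rw [eq_div_iff hr1]
      have h := Nat.choose_mul_succ_eq (p + 1 + r) (p + 1)
      rw [show p + 1 + r + 1 - (p + 1) = r + 1 by omega] at h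
      have h2 : ((p + 1 + r).choose (p + 1) : ℚ) * ((p : ℚ) + 1 + r + 1)
          = ((p + 1 + r + 1).choose (p + 1) : ℚ) * ((r : ℚ) + 1) := by exact_mod_cast h
      linear_combination -h2
    have hc2 : (((p + 1 + r + 2).choose (p + 1) : ℚ)) =
        ((p : ℚ) + 1 + r + 2) * ((p + 1 + r + 1).choose (p + 1) : ℚ) / ((r : ℚ) + 2) := by
      rw [eq_div_iff hr2]
      have h := Nat.choose_mul_succ_eq (p + 1 + r + 1) (p + 1)
      rw [show p + 1 + r + 1 + 1 - (p + 1) = r + 2 by omega,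
        show p + 1 + r + 1 + 1 = p + 1 + r + 2 by omega] at h
      have h2 : ((p + 1 + r + 1).choose (p + 1) : ℚ) * ((p : ℚ) + 1 + r + 1 + 1)
          = ((p + 1 + r + 2).choose (p + 1) : ℚ) * ((r : ℚ) + 2) := by exact_mod_cast h
      linear_combination -h2
    have hc3 : (((p + 1 + r + 3).choose (p + 1) : ℚ)) =
        ((p : ℚ) + 1 + r + 3) * ((p + 1 + r + 2).choose (p + 1) : ℚ) / ((r : ℚ) + 3) := by
      rw [eq_div_iff hr3]
      have h := Nat.choose_mul_succ_eq (p + 1 + r + 2) (p + 1)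
      rw [show p + 1 + r + 2 + 1 - (p + 1) = r + 3 by omega,
        show p + 1 + r + 2 + 1 = p + 1 + r + 3 by omega] at h
      have h2 : ((p + 1 + r + 2).choose (p + 1) : ℚ) * ((p : ℚ) + 1 + r + 2 + 1)
          = ((p + 1 + r + 3).choose (p + 1) : ℚ) * ((r : ℚ) + 3) := by exact_mod_cast h
      linear_combination -h2
    have hd0 : (((p + 1 + r + 2).choose p : ℚ)) =
        ((p : ℚ) + 1) * ((p + 1 + r + 2).choose (p + 1) : ℚ) / ((r : ℚ) + 3) := by
      rw [eq_div_iff hr3]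
      have h := Nat.choose_succ_right_eq (p + 1 + r + 2) p
      rw [show p + 1 + r + 2 - p = r + 3 by omega] at h
      have h2 : ((p + 1 + r + 2).choose (p + 1) : ℚ) * ((p : ℚ) + 1)
          = ((p + 1 + r + 2).choose p : ℚ) * ((r : ℚ) + 3) := by exact_mod_cast h
      linear_combination -h2
    have hd2 : (((p + 1 + r + 2).choose (p + 1 + 1) : ℚ)) =
        ((r : ℚ) + 2) * ((p + 1 + r + 2).choose (p + 1) : ℚ) / ((p : ℚ) + 2) := by
      rw [eq_div_iff hp2]
      have h := Nat.choose_succ_right_eq (p + 1 + r + 2) (p + 1)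
      rw [show p + 1 + r + 2 - (p + 1) = r + 2 by omega] at h
      have h2 : ((p + 1 + r + 2).choose (p + 1 + 1) : ℚ) * ((p : ℚ) + 1 + 1)
          = ((p + 1 + r + 2).choose (p + 1) : ℚ) * ((r : ℚ) + 2) := by exact_mod_cast h
      linear_combination h2
    have key : 9 * (((p : ℚ) + 1 + r) + 3) ^ 2 * ((p + 1 + r + 3).choose (p + 1) : ℚ)
        + 3 * (((p : ℚ) + 1 + r) + 3) * (((p : ℚ) + 1 + r) + 2)
            * ((p + 1 + r + 2).choose (p + 1) : ℚ)
        + 12 * (((p : ℚ) + 1 + r) + 1) * (((p : ℚ) + 1 + r) + 2)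
            * ((p + 1 + r).choose (p + 1) : ℚ)
      = 24 * (((p : ℚ) + 1 + r) + 2) ^ 2 * ((p + 1 + r + 1).choose (p + 1) : ℚ)
        + 9 * ((p : ℚ) + 1) ^ 2 * ((p + 1 + r + 2).choose p : ℚ)
        + 3 * (10 * ((p : ℚ) + 1) ^ 2 + 10 * ((p : ℚ) + 1) + 3)
            * ((p + 1 + r + 2).choose (p + 1) : ℚ)
        + 9 * (((p : ℚ) + 1) + 1) ^ 2 * ((p + 1 + r + 2).choose (p + 1 + 1) : ℚ) := by
      rw [hc3, hd0, hd2, hc2, hc1]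
      field_simp
      ring
    push_cast at key ⊢
    exact_mod_cast key

lemma ptC (m j : ℕ) (hj : j ≤ m + 3) :
    ((m : ℤ) + 3) ^ 2 * (((m + 3).choose j : ℤ) * (-3) ^ (m + 3 - j))
      - ((m : ℤ) + 3) * ((m : ℤ) + 2) * (((m + 2).choose j : ℤ) * (-3) ^ (m + 2 - j))
      - 24 * ((m : ℤ) + 2) ^ 2 * (((m + 1).choose j : ℤ) * (-3) ^ (m + 1 - j))
      - 36 * ((m : ℤ) + 1) * ((m : ℤ) + 2) * ((m.choose j : ℤ) * (-3) ^ (m - j))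
    = (j : ℤ) ^ 2 * ((-3) ^ (m + 2 - (j - 1)) * ((m + 2).choose (j - 1) : ℤ))
      - (10 * (j : ℤ) ^ 2 + 10 * (j : ℤ) + 3)
          * ((-3) ^ (m + 2 - j) * ((m + 2).choose j : ℤ))
      + 9 * ((j : ℤ) + 1) ^ 2 * ((-3) ^ (m + 2 - (j + 1)) * ((m + 2).choose (j + 1) : ℤ)) := by
  rcases Nat.eq_zero_or_pos j with rfl | hj1
  · -- j = 0
    rw [show m + 3 - 0 = m + 3 by omega, show m + 2 - 0 = m + 2 by omega,
      show m + 1 - 0 = m + 1 by omega, show m - 0 = m by omega,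
show m + 2 - (0 + 1) = m + 1 by omega]
    have h := lemC m 0
    push_cast at h ⊢
    linear_combination ((-3 : ℤ) ^ m * (-3)) * h
  rcases Nat.lt_or_ge m j with hlt | hge
  · -- j ∈ {m+1, m+2, m+3}
    have hd : j = m + 1 ∨ j = m + 2 ∨ j = m + 3 := by omega
    rcases hd with rfl | rfl | rfl
    · -- j = m + 1
      rw [show m + 3 - (m + 1) = 2 by omega, show m + 2 - (m + 1) = 1 by omega,
        show m + 1 - (m + 1) = 0 by omega, show m - (m + 1) = 0 by omega,
        show m + 2 - (m + 1 - 1) = 2 by omega, show m + 2 - (m + 1 + 1) = 0 by omega]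
      have h := lemC m (m + 1)
      rw [Nat.choose_eq_zero_of_lt (by omega : m < m + 1)] at h ⊢
      push_cast at h ⊢
      linear_combination h
    · -- j = m + 2
      rw [show m + 3 - (m + 2) = 1 by omega, show m + 2 - (m + 2) = 0 by omega,
        show m + 1 - (m + 2) = 0 by omega, show m - (m + 2) = 0 by omega,
        show m + 2 - (m + 2 - 1) = 1 by omega, show m + 2 - (m + 2 + 1) = 0 by omega,
        show m + 2 - 1 = m + 1 by omega,
        Nat.choose_eq_zero_of_lt (by omega : m + 1 < m + 2),
        Nat.choose_eq_zero_of_lt (by omega : m < m + 2),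
        Nat.choose_eq_zero_of_lt (by omega : m + 2 < m + 2 + 1),
        Nat.choose_self, Nat.choose_succ_self_right,
        show (m + 2).choose (m + 1) = m + 2 from Nat.choose_succ_self_right (m + 1)]
      push_cast; ring
    · -- j = m + 3
      rw [show m + 3 - (m + 3) = 0 by omega, show m + 2 - (m + 3) = 0 by omega,
        show m + 1 - (m + 3) = 0 by omega, show m - (m + 3) = 0 by omega,
        show m + 2 - (m + 3 - 1) = 0 by omega, show m + 2 - (m + 3 + 1) = 0 by omega,
        show m + 3 - 1 = m + 2 by omega,
        Nat.choose_eq_zero_of_lt (by omega : m + 2 < m + 3),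
        Nat.choose_eq_zero_of_lt (by omega : m + 1 < m + 3),
        Nat.choose_eq_zero_of_lt (by omega : m < m + 3),
        Nat.choose_eq_zero_of_lt (by omega : m + 2 < m + 3 + 1),
        Nat.choose_self, show (m + 2).choose (m + 2) = 1 from Nat.choose_self (m + 2)]
      push_cast; ring
  · -- j ≤ m
    obtain ⟨u, rfl⟩ : ∃ u, m = j + u := ⟨m - j, by omega⟩
    rw [show j + u + 3 - j = u + 3 by omega, show j + u + 2 - j = u + 2 by omega,
      show j + u + 1 - j = u + 1 by omega, show j + u - j = u by omega,
      show j + u + 2 - (j - 1) = u + 3 by omega,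
      show j + u + 2 - (j + 1) = u + 1 by omega]
    have h := lemC (j + u) j
    push_cast at h ⊢
    linear_combination ((-3 : ℤ) ^ u * (-3)) * h

/-- The number `b_n = ∑_{j=0}^n C(n,j) (-3)^{n-j} a_j` (with
`a_j = ∑_k C(j,k)² C(2k,k)`) of closed circuits of length `n` in the triangular
lattice satisfies `n² b_n - n(n-1) b_{n-1} - 24(n-1)² b_{n-2} - 36(n-2)(n-1) b_{n-3} = 0`. -/
theorem triangular_lattice_recurrence (a b : ℕ → ℤ)
    (ha : ∀ n, a n = ∑ k ∈ Finset.range (n + 1),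
      (n.choose k : ℤ) ^ 2 * ((2 * k).choose k : ℤ))
    (hb : ∀ n, b n = ∑ j ∈ Finset.range (n + 1),
      (n.choose j : ℤ) * (-3) ^ (n - j) * a j) :
    b 0 = 1 ∧ b 1 = 0 ∧ b 2 = 6 ∧
    ∀ n : ℕ, 3 ≤ n →
      (n : ℤ) ^ 2 * b n - (n : ℤ) * ((n : ℤ) - 1) * b (n - 1)
      - 24 * ((n : ℤ) - 1) ^ 2 * b (n - 2)
      - 36 * ((n : ℤ) - 2) * ((n : ℤ) - 1) * b (n - 3) = 0 := by
  have ha0 : a 0 = 1 := by rw [ha]; simp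
  have ha1 : a 1 = 3 := by
    rw [ha]; rw [Finset.sum_range_succ, Finset.sum_range_one]; norm_num
  have ha2 : a 2 = 15 := by
    rw [ha]; rw [Finset.sum_range_succ, Finset.sum_range_succ, Finset.sum_range_one]
    norm_num [show (4:ℕ).choose 2 = 6 from rfl]
  refine ⟨?_, ?_, ?_, ?_⟩
  · rw [hb]; simp [ha0]
  · rw [hb]; rw [Finset.sum_range_succ, Finset.sum_range_one]; norm_num [ha0, ha1]
  · rw [hb]; rw [Finset.sum_range_succ, Finset.sum_range_succ, Finset.sum_range_one]
    norm_num [ha0, ha1, ha2]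
  intro n hn
  obtain ⟨m, rfl⟩ : ∃ m, n = m + 3 := ⟨n - 3, by omega⟩
  rw [show m + 3 - 1 = m + 2 by omega, show m + 3 - 2 = m + 1 by omega,
    show m + 3 - 3 = m by omega]
  have hb3 : b (m + 3) = ∑ j ∈ Finset.range (m + 3 + 1),
      (((m + 3).choose j : ℤ) * (-3) ^ (m + 3 - j) * a j) := hb (m + 3)
  have hb2' : b (m + 2) = ∑ j ∈ Finset.range (m + 3 + 1),
      (((m + 2).choose j : ℤ) * (-3) ^ (m + 2 - j) * a j) := by
    rw [hb (m + 2)]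
    apply Finset.sum_subset (Finset.range_subset_range.mpr (by omega))
    intro x hx hnx
    simp only [Finset.mem_range] at hx hnx
    rw [Nat.choose_eq_zero_of_lt (by omega)]
    push_cast; ring
  have hb1' : b (m + 1) = ∑ j ∈ Finset.range (m + 3 + 1),
      (((m + 1).choose j : ℤ) * (-3) ^ (m + 1 - j) * a j) := by
    rw [hb (m + 1)]
    apply Finset.sum_subset (Finset.range_subset_range.mpr (by omega))
    intro x hx hnx
    simp only [Finset.mem_range] at hx hnx
    rw [Nat.choose_eq_zero_of_lt (by omega)]
    push_cast; ring
  have hb0' : b m = ∑ j ∈ Finset.range (m + 3 + 1),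
      ((m.choose j : ℤ) * (-3) ^ (m - j) * a j) := by
    rw [hb m]
    apply Finset.sum_subset (Finset.range_subset_range.mpr (by omega))
    intro x hx hnx
    simp only [Finset.mem_range] at hx hnx
    rw [Nat.choose_eq_zero_of_lt (by omega)]
    push_cast; ring
  have main : ((m : ℤ) + 3) ^ 2 * (∑ j ∈ Finset.range (m + 3 + 1),
        (((m + 3).choose j : ℤ) * (-3) ^ (m + 3 - j) * a j))
      - ((m : ℤ) + 3) * ((m : ℤ) + 2) * (∑ j ∈ Finset.range (m + 3 + 1),
        (((m + 2).choose j : ℤ) * (-3) ^ (m + 2 - j) * a j))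
      - 24 * ((m : ℤ) + 2) ^ 2 * (∑ j ∈ Finset.range (m + 3 + 1),
        (((m + 1).choose j : ℤ) * (-3) ^ (m + 1 - j) * a j))
      - 36 * ((m : ℤ) + 1) * ((m : ℤ) + 2) * (∑ j ∈ Finset.range (m + 3 + 1),
        ((m.choose j : ℤ) * (-3) ^ (m - j) * a j)) = 0 := by
    rw [Finset.mul_sum, Finset.mul_sum, Finset.mul_sum, Finset.mul_sum,
      ← Finset.sum_sub_distrib, ← Finset.sum_sub_distrib, ← Finset.sum_sub_distrib]
    have step : ∀ j ∈ Finset.range (m + 3 + 1),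
        ((m : ℤ) + 3) ^ 2 * (((m + 3).choose j : ℤ) * (-3) ^ (m + 3 - j) * a j)
          - ((m : ℤ) + 3) * ((m : ℤ) + 2) * (((m + 2).choose j : ℤ) * (-3) ^ (m + 2 - j) * a j)
          - 24 * ((m : ℤ) + 2) ^ 2 * (((m + 1).choose j : ℤ) * (-3) ^ (m + 1 - j) * a j)
          - 36 * ((m : ℤ) + 1) * ((m : ℤ) + 2) * ((m.choose j : ℤ) * (-3) ^ (m - j) * a j)
        = (j : ℤ) ^ 2 * ((-3) ^ (m + 2 - (j - 1)) * ((m + 2).choose (j - 1) : ℤ)) * a j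
          - (10 * (j : ℤ) ^ 2 + 10 * (j : ℤ) + 3)
              * ((-3) ^ (m + 2 - j) * ((m + 2).choose j : ℤ)) * a j
          + 9 * ((j : ℤ) + 1) ^ 2
              * ((-3) ^ (m + 2 - (j + 1)) * ((m + 2).choose (j + 1) : ℤ)) * a j := by
      intro j hjm
      have hj : j ≤ m + 3 := by simp only [Finset.mem_range] at hjm; omega
      linear_combination (a j) * ptC m j hj
    rw [Finset.sum_congr rfl step]
    rw [Finset.sum_add_distrib, Finset.sum_sub_distrib]
    have S1 : ∑ j ∈ Finset.range (m + 3 + 1),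
        ((j : ℤ) ^ 2 * ((-3) ^ (m + 2 - (j - 1)) * ((m + 2).choose (j - 1) : ℤ)) * a j)
        = ∑ t ∈ Finset.range (m + 3),
          (((t : ℤ) + 1) ^ 2 * ((-3) ^ (m + 2 - t) * ((m + 2).choose t : ℤ)) * a (t + 1)) := by
      rw [Finset.sum_range_succ']
      norm_num
    have S2 : ∑ j ∈ Finset.range (m + 3 + 1),
        ((10 * (j : ℤ) ^ 2 + 10 * (j : ℤ) + 3)
          * ((-3) ^ (m + 2 - j) * ((m + 2).choose j : ℤ)) * a j)
        = ∑ t ∈ Finset.range (m + 3),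
          ((10 * (t : ℤ) ^ 2 + 10 * (t : ℤ) + 3)
            * ((-3) ^ (m + 2 - t) * ((m + 2).choose t : ℤ)) * a t) := by
      rw [Finset.sum_range_succ]
      rw [Nat.choose_eq_zero_of_lt (by omega : m + 2 < m + 3)]
      push_cast; ring
    have S3 : ∑ j ∈ Finset.range (m + 3 + 1),
        (9 * ((j : ℤ) + 1) ^ 2
          * ((-3) ^ (m + 2 - (j + 1)) * ((m + 2).choose (j + 1) : ℤ)) * a j)
        = ∑ t ∈ Finset.range (m + 3),
          (9 * (t : ℤ) ^ 2 * ((-3) ^ (m + 2 - t) * ((m + 2).choose t : ℤ)) * a (t - 1)) := by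
      rw [Finset.sum_range_succ, Nat.choose_eq_zero_of_lt (by omega : m + 2 < m + 3 + 1)]
      conv_lhs => rw [show m + 3 = m + 2 + 1 by omega]
      rw [Finset.sum_range_succ, Nat.choose_eq_zero_of_lt (by omega : m + 2 < m + 2 + 1)]
      conv_rhs => rw [show m + 3 = m + 2 + 1 by omega, Finset.sum_range_succ']
      norm_num
    rw [S1, S2, S3, ← Finset.sum_sub_distrib, ← Finset.sum_add_distrib]
    apply Finset.sum_eq_zero
    intro t _
    linear_combination ((-3 : ℤ) ^ (m + 2 - t) * ((m + 2).choose t : ℤ)) * recA a ha t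
  rw [hb3, hb2', hb1', hb0']
  push_cast
  linear_combination main
end

section
/- Let a : ℕ → ℂ and let t ∈ ℂ with |t| < 1 be such that the series ∑_{j=0}^{∞} |a_j| · ( |t| / (1 − |t|) )^j converges. Then the series ∑_{n=0}^{∞} ( ∑_{j=0}^{n} binom(n, j) · a_j ) t^n converges and equals (1 / (1 − t)) · ∑_{j=0}^{∞} a_j · ( t / (1 − t) )^j. -/
open Finset

private lemma summable_antidiag {F : ℕ × ℕ → ℂ} (h : Summable F) :
    Summable fun n ↦ ∑ kl ∈ antidiagonal n, F kl := by
  have h' : Summable fun x : Σ n : ℕ, antidiagonal n ↦ F (x.2 : ℕ × ℕ) :=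
    Finset.HasAntidiagonal.sigmaAntidiagonalEquivProd.summable_iff.2 h
  conv => congr; ext; rw [← Finset.sum_finset_coe, ← tsum_fintype (L := .unconditional _)]
  exact h'.sigma' fun n ↦ (hasSum_fintype _).summable

private lemma tsum_antidiag {F : ℕ × ℕ → ℂ} (h : Summable F) :
    ∑' p : ℕ × ℕ, F p = ∑' n, ∑ kl ∈ antidiagonal n, F kl := by
  conv_rhs => congr; ext; rw [← Finset.sum_finset_coe, ← tsum_fintype (L := .unconditional _)]
  rw [← Finset.HasAntidiagonal.sigmaAntidiagonalEquivProd.tsum_eq F]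
  exact Summable.tsum_sigma' (fun n ↦ (hasSum_fintype _).summable)
    (Finset.HasAntidiagonal.sigmaAntidiagonalEquivProd.summable_iff.2 h)

/-- Binomial transform of generating functions: if `c_n = ∑_{j≤n} C(n,j) a_j`,
then `∑ c_n t^n = (1/(1-t)) ∑ a_j (t/(1-t))^j` in the indicated region of
absolute convergence. -/
theorem binomial_transform_generating_function (a : ℕ → ℂ) (t : ℂ)
    (ht : ‖t‖ < 1)
    (hconv : Summable fun j : ℕ =>
      ‖a j‖ * (‖t‖ / (1 - ‖t‖)) ^ j) :
    Summable (fun n : ℕ => (∑ j ∈ Finset.range (n + 1), (n.choose j : ℂ) * a j) * t ^ n) ∧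
    ∑' n : ℕ, (∑ j ∈ Finset.range (n + 1), (n.choose j : ℂ) * a j) * t ^ n =
      (1 / (1 - t)) * ∑' j : ℕ, a j * (t / (1 - t)) ^ j := by
  have ht1 : t ≠ 1 := by rintro rfl; simp at ht
  have h1t : (1:ℂ) - t ≠ 0 := sub_ne_zero.2 ht1.symm
  set r : ℝ := ‖t‖ with hr
  have hr0 : 0 ≤ r := norm_nonneg t
  have hr1 : (0:ℝ) < 1 - r := by linarith
  have hnt : ‖t‖ < 1 := ht
  have hnr : ‖r‖ < 1 := by rwa [Real.norm_of_nonneg hr0]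
  -- the double-indexed family
  set F : ℕ × ℕ → ℂ := fun p ↦ a p.1 * ((p.2 + p.1).choose p.1 : ℂ) * t ^ (p.2 + p.1) with hF
  -- summability of norms
  have habs : Summable fun p : ℕ × ℕ ↦ ‖F p‖ := by
    have hnorm : ∀ p : ℕ × ℕ, ‖F p‖
        = ‖a p.1‖ * (((p.2 + p.1).choose p.1 : ℝ) * r ^ (p.2 + p.1)) := by
      intro p
      simp [hF, abs_of_nonneg, Nat.cast_nonneg, hr0, mul_assoc, hr]
    have hfib : ∀ j : ℕ, HasSum (fun m : ℕ ↦ ‖a j‖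
        * (((m + j).choose j : ℝ) * r ^ (m + j)))
        (‖a j‖ * (r ^ j * (1 / (1 - r) ^ (j + 1)))) := by
      intro j
      have h := (hasSum_choose_mul_geometric_of_norm_lt_one j hnr).mul_left (r ^ j)
      have h2 := h.mul_left (‖a j‖)
      convert h2 using 2 with m
      · rfl
      rw [pow_add]; ring
    rw [(summable_prod_of_nonneg (fun p ↦ norm_nonneg _))]
    constructor
    · intro j
      simp only [hnorm]
      exact (hfib j).summable
    · apply Summable.congr (hconv.mul_left (1 / (1 - r)))
      intro j
      have e1 : ∑' m : ℕ, ‖F (j, m)‖ = ‖a j‖ * (r ^ j * (1 / (1 - r) ^ (j + 1))) := by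
        rw [tsum_congr (fun m ↦ hnorm (j, m))]
        exact (hfib j).tsum_eq
      rw [e1, div_pow, pow_succ]
      rw [mul_comm ((1-r)^j) (1-r), ← div_div]
      ring
  have hsum : Summable F := habs.of_norm
  -- diagonal sums give the LHS
  have hdiag : ∀ n : ℕ, ∑ kl ∈ antidiagonal n, F kl
      = (∑ j ∈ Finset.range (n + 1), (n.choose j : ℂ) * a j) * t ^ n := by
    intro n
    rw [Finset.Nat.sum_antidiagonal_eq_sum_range_succ_mk, Finset.sum_mul]
    refine Finset.sum_congr rfl fun j hj ↦ ?_
    simp only [Finset.mem_range, Nat.lt_succ_iff] at hj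
    simp only [hF]
    rw [Nat.sub_add_cancel hj]
    ring
  have hsum_left : Summable
      (fun n : ℕ => (∑ j ∈ Finset.range (n + 1), (n.choose j : ℂ) * a j) * t ^ n) := by
    refine (summable_antidiag hsum).congr fun n ↦ (hdiag n)
  refine ⟨hsum_left, ?_⟩
  -- compute via Fubini
  have hfibC : ∀ j : ℕ, HasSum (fun m : ℕ ↦ F (j, m))
      (a j * (t ^ j * (1 / (1 - t) ^ (j + 1)))) := by
    intro j
    have h := ((hasSum_choose_mul_geometric_of_norm_lt_one j hnt).mul_left (t ^ j)).mul_left (a j)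
    convert h using 2 with m
    · rfl
    simp only [hF]
    rw [pow_add]; ring
  calc ∑' n : ℕ, (∑ j ∈ Finset.range (n + 1), (n.choose j : ℂ) * a j) * t ^ n
      = ∑' n : ℕ, ∑ kl ∈ antidiagonal n, F kl := by
        exact tsum_congr fun n ↦ (hdiag n).symm
    _ = ∑' p : ℕ × ℕ, F p := (tsum_antidiag hsum).symm
    _ = ∑' j : ℕ, ∑' m : ℕ, F (j, m) := Summable.tsum_prod' hsum (fun j ↦ (hfibC j).summable)
    _ = ∑' j : ℕ, (1 / (1 - t)) * (a j * (t / (1 - t)) ^ j) := by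
        refine tsum_congr fun j ↦ ?_
        rw [(hfibC j).tsum_eq, div_pow, pow_succ]
        rw [mul_comm ((1-t)^j) (1-t), ← div_div]
        ring
    _ = (1 / (1 - t)) * ∑' j : ℕ, a j * (t / (1 - t)) ^ j := tsum_mul_left
end

section
/- Let F₂ be the free group on two generators x and y, and let Q = (1 + x + y)(1 + x⁻¹ + y⁻¹) ∈ ℂ[F₂]. Set a_n = [Q^n]_0. Then a_0 = 1, a_1 = 3, and for all n ≥ 2 the recurrence n · a_n − (17n − 12) · a_{n−1} + 36(2n − 3) · a_{n−2} = 0 holds. -/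
open PowerSeries

namespace FGQR

noncomputable section



/-- generating series of `2^n * catalan n`. -/
def B : PowerSeries ℂ := PowerSeries.mk fun n => (2 ^ n * catalan n : ℂ)

lemma hB : B = 1 + X * (B * B + B * B) := by
  ext n
  cases n with
  | zero =>
    simp [B, coeff_zero_eq_constantCoeff]
  | succ n =>
    rw [map_add, coeff_succ_X_mul, map_add]
    simp only [B, coeff_mk, coeff_one, Nat.succ_ne_zero, if_false, coeff_mul, zero_add]
    have key : ∀ p ∈ Finset.HasAntidiagonal.antidiagonal n,
        (2:ℂ) ^ p.1 * catalan p.1 * ((2:ℂ) ^ p.2 * catalan p.2)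
          = (2:ℂ)^n * (catalan p.1 * catalan p.2) := by
      intro p hp
      rw [Finset.HasAntidiagonal.mem_antidiagonal] at hp
      rw [← hp, pow_add]
      ring
    rw [Finset.sum_congr rfl key, ← Finset.mul_sum]
    have : ((catalan (n+1) : ℕ) : ℂ) = ∑ p ∈ Finset.HasAntidiagonal.antidiagonal n, (catalan p.1 * catalan p.2 : ℂ) := by
      rw [catalan_succ' n]
      push_cast
      rfl
    rw [pow_succ]
    rw [this]
    ring

def U : PowerSeries ℂ := 1 - 3 * X * B

def Gs : PowerSeries ℂ := U⁻¹

def Ws : PowerSeries ℂ := X * B * B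

lemma hU0 : constantCoeff U = 1 := by
  simp [U]

lemma hUG : U * Gs = 1 :=
  PowerSeries.mul_inv_cancel U (by rw [hU0]; exact one_ne_zero)

lemma hG0 : constantCoeff Gs = 1 := by
  have := congrArg (constantCoeff) hUG
  rw [map_mul, hU0, one_mul, map_one] at this
  exact this

lemma hW0 : constantCoeff Ws = 0 := by
  simp [Ws]

/-- coefficients of `Gs * Ws ^ k` -/
def q (n k : ℕ) : ℂ := coeff n (Gs * Ws ^ k)

lemma q_zero (k : ℕ) : q 0 k = if k = 0 then 1 else 0 := by
  rw [q, coeff_zero_eq_constantCoeff_apply, map_mul, map_pow, hG0, hW0, one_mul]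
  cases k with
  | zero => simp
  | succ k => simp [zero_pow]

lemma SI0 : Gs = 1 + (X * Gs + X * Gs + X * Gs)
    + (X * (Gs * Ws) + X * (Gs * Ws) + X * (Gs * Ws)
      + X * (Gs * Ws) + X * (Gs * Ws) + X * (Gs * Ws)) := by
  have h : U * Gs = 1 := hUG
  rw [U] at h
  rw [Ws]
  linear_combination h + (3 * X * Gs) * hB

lemma SIW : Ws = X * (1 + (Ws + Ws + Ws + Ws) + (Ws*Ws + Ws*Ws + Ws*Ws + Ws*Ws)) := by
  rw [Ws]
  linear_combination (X * (B + 1 + 2 * X * B * B)) * hB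

lemma qstep0 (n : ℕ) : q (n+1) 0 = 3 * q n 0 + 6 * q n 1 := by
  simp only [q, pow_zero, mul_one, pow_one]
  nth_rewrite 1 [SI0]
  rw [map_add, map_add]
  rw [coeff_one]
  simp only [Nat.succ_ne_zero, if_false, map_add, coeff_succ_X_mul]
  ring

lemma qstep1 (n m : ℕ) : q (n+1) (m+1) = q n m + 4 * q n (m+1) + 4 * q n (m+1+1) := by
  have SI : Gs * Ws ^ (m+1) =
      X * (Gs * Ws ^ m) +
      (X * (Gs * Ws ^ (m+1)) + X * (Gs * Ws ^ (m+1)) + X * (Gs * Ws ^ (m+1)) + X * (Gs * Ws ^ (m+1))) +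
      (X * (Gs * Ws ^ (m+1+1)) + X * (Gs * Ws ^ (m+1+1)) + X * (Gs * Ws ^ (m+1+1)) + X * (Gs * Ws ^ (m+1+1))) := by
    have h2 : Ws * (Gs * Ws ^ m)
        = (X * (1 + (Ws + Ws + Ws + Ws) + (Ws*Ws + Ws*Ws + Ws*Ws + Ws*Ws))) * (Gs * Ws ^ m) := by
      rw [← SIW]
    calc Gs * Ws ^ (m+1) = Ws * (Gs * Ws ^ m) := by ring
    _ = _ := by rw [h2]; ring
  rw [q, SI]
  simp only [map_add, coeff_succ_X_mul]
  simp only [q]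
  ring



lemma hE : (1 - 9*X) + U - 2*(U*U) = 0 := by
  rw [U]
  linear_combination (9*X) * hB

lemma hQuad : (1 - 9*X) * (Gs*Gs) + Gs - 2 = 0 := by
  linear_combination (Gs*Gs) * hE + (2 + 2*(U*Gs) - Gs) * hUG

def DG : PowerSeries ℂ := PowerSeries.derivative ℂ Gs

lemma d2 : PowerSeries.derivative ℂ (2 : PowerSeries ℂ) = 0 := by
  rw [← map_ofNat C 2, derivative_C]

lemma d9 : PowerSeries.derivative ℂ (9 : PowerSeries ℂ) = 0 := by
  rw [← map_ofNat C 9, derivative_C]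

lemma dQuad : (2*(1-9*X)*Gs + 1) * DG = 9*(Gs*Gs) := by
  have h := congrArg (⇑(PowerSeries.derivative ℂ)) hQuad
  simp only [map_add, map_sub, Derivation.leibniz, derivative_X, smul_eq_mul, mul_one,
    Derivation.map_one_eq_zero, d2, d9, map_zero, mul_zero, zero_add, add_zero] at h
  rw [DG]
  linear_combination h


lemma hH : (2*(1-9*X)*Gs + 1)*(2*(1-9*X)*Gs + 1) = 9 - 72*X := by
  linear_combination (4*(1-9*X)) * hQuad

lemma h3 : (9 - 72*X) * DG = 9*(Gs*Gs)*(2*(1-9*X)*Gs+1) := by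
  linear_combination (-DG) * hH + (2*(1-9*X)*Gs+1) * dQuad

lemma hODE9 : (1-9*X) * ((9-72*X) * DG) = 9*((5-36*X)*Gs - 2) := by
  linear_combination (1-9*X) * h3 + (9*(2*(1-9*X)*Gs - 1)) * hQuad

def Fs : PowerSeries ℂ := X * DG

lemma hcF (n : ℕ) : coeff n Fs = n * coeff n Gs := by
  cases n with
  | zero =>
    rw [Fs, coeff_zero_eq_constantCoeff_apply, map_mul, constantCoeff_X, zero_mul]
    simp
  | succ n =>
    rw [Fs, coeff_succ_X_mul, DG, coeff_derivative]
    push_cast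
    ring

lemma hFin : 9*Fs + 648*(X*(X*Fs)) + 324*(X*(X*Gs)) + 18*X
    = 153*(X*Fs) + 45*(X*Gs) := by
  rw [Fs]
  linear_combination X * hODE9

lemma final9 (m : ℕ) :
    9*((m:ℂ)+2) * coeff (m+2) Gs + 648*(m:ℂ)*coeff m Gs + 324*coeff m Gs
    = 153*((m:ℂ)+1)*coeff (m+1) Gs + 45*coeff (m+1) Gs := by
  have hFin' := hFin
  rw [show (9:PowerSeries ℂ) = C 9 from (map_ofNat _ _).symm,
      show (648:PowerSeries ℂ) = C 648 from (map_ofNat _ _).symm,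
      show (324:PowerSeries ℂ) = C 324 from (map_ofNat _ _).symm,
      show (18:PowerSeries ℂ) = C 18 from (map_ofNat _ _).symm,
      show (153:PowerSeries ℂ) = C 153 from (map_ofNat _ _).symm,
      show (45:PowerSeries ℂ) = C 45 from (map_ofNat _ _).symm] at hFin'
  have h := congrArg (⇑(coeff (m+2))) hFin'
  simp only [map_add, coeff_C_mul, coeff_succ_X_mul, hcF, coeff_X] at h
  push_cast at h
  norm_num at h
  linear_combination h




abbrev Γ := FreeGroup (Fin 2)
abbrev Ltr := Fin 2 × Bool

/-- distance to the base point in the triangle-tree, computed from the reduced word. -/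
def dL : List Ltr → ℕ
  | [] => 0
  | (_, false) :: t => dL t + 1
  | (_, true) :: (_, false) :: t => dL t + 1
  | (_, true) :: t => dL t + 1

@[simp] lemma dL_nil : dL [] = 0 := rfl
@[simp] lemma dL_neg (a : Fin 2) (t : List Ltr) : dL ((a, false) :: t) = dL t + 1 := by
  cases t with
  | nil => rfl
  | cons h t => rfl
@[simp] lemma dL_pos_nil (a : Fin 2) : dL [(a, true)] = 1 := rfl
@[simp] lemma dL_pos_neg (a b : Fin 2) (t : List Ltr) :
    dL ((a, true) :: (b, false) :: t) = dL t + 1 := rfl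
@[simp] lemma dL_pos_pos (a b : Fin 2) (t : List Ltr) :
    dL ((a, true) :: (b, true) :: t) = dL ((b, true) :: t) + 1 := rfl

lemma dL_cons_ne_zero (h : Ltr) (t : List Ltr) : dL (h :: t) ≠ 0 := by
  obtain ⟨a, b | b⟩ := h
  · simp
  · cases t with
    | nil => simp
    | cons h2 t2 =>
      obtain ⟨c, d | d⟩ := h2 <;> simp

/-- prepending a letter to a reduced word -/
def cons1 (l : Ltr) (w : List Ltr) : List Ltr :=
  List.casesOn w [l] fun hd tl => if l.1 = hd.1 ∧ l.2 = !hd.2 then tl else l :: hd :: tl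

@[simp] lemma cons1_nil (l : Ltr) : cons1 l [] = [l] := rfl
@[simp] lemma cons1_cons (l h : Ltr) (t : List Ltr) :
    cons1 l (h :: t) = if l.1 = h.1 ∧ l.2 = !h.2 then t else l :: h :: t := rfl

lemma toWord_mk_single_mul (l : Ltr) (g : Γ) :
    (FreeGroup.mk [l] * g).toWord = cons1 l g.toWord := by
  conv_lhs => rw [← FreeGroup.mk_toWord (x := g)]
  rw [FreeGroup.mul_mk, FreeGroup.toWord_mk, List.singleton_append, FreeGroup.reduce.cons,
    FreeGroup.reduce_toWord]
  cases g.toWord with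
  | nil => rfl
  | cons h t => rfl

lemma toWord_of_mul (i : Fin 2) (g : Γ) :
    (FreeGroup.of i * g).toWord = cons1 (i, true) g.toWord :=
  toWord_mk_single_mul (i, true) g

lemma toWord_ofinv_mul (i : Fin 2) (g : Γ) :
    ((FreeGroup.of i)⁻¹ * g).toWord = cons1 (i, false) g.toWord := by
  have h1 : (FreeGroup.of i)⁻¹ = FreeGroup.mk [(i, false)] := by
    rw [show FreeGroup.of i = FreeGroup.mk [(i, true)] from rfl, FreeGroup.inv_mk]
    rfl
  rw [h1]
  exact toWord_mk_single_mul (i, false) g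



def gx : Γ := FreeGroup.of 0
def gy : Γ := FreeGroup.of 1

lemma app3 (u v : Γ) (f : MonoidAlgebra ℂ Γ) (g : Γ) :
    ((1 + MonoidAlgebra.single u (1:ℂ) + MonoidAlgebra.single v (1:ℂ)) * f).coeff g
      = f.coeff g + f.coeff (u⁻¹ * g) + f.coeff (v⁻¹ * g) := by
  rw [add_mul, add_mul, one_mul]
  rw [MonoidAlgebra.coeff_add, MonoidAlgebra.coeff_add, Finsupp.add_apply, Finsupp.add_apply]
  rw [MonoidAlgebra.coeff_single_mul_apply, MonoidAlgebra.coeff_single_mul_apply]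
  ring

lemma Qapp (Q : MonoidAlgebra ℂ Γ)
    (hQ : Q = (1 + MonoidAlgebra.single (FreeGroup.of 0) (1 : ℂ)
                 + MonoidAlgebra.single (FreeGroup.of 1) (1 : ℂ)) *
              (1 + MonoidAlgebra.single (FreeGroup.of 0)⁻¹ (1 : ℂ)
                 + MonoidAlgebra.single (FreeGroup.of 1)⁻¹ (1 : ℂ)))
    (f : MonoidAlgebra ℂ Γ) (g : Γ) :
    (Q * f).coeff g = f.coeff g + f.coeff g + f.coeff g
      + f.coeff (gx⁻¹ * g) + f.coeff (gx * g) + f.coeff (gy⁻¹ * g) + f.coeff (gy * g)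
      + f.coeff (gy * (gx⁻¹ * g)) + f.coeff (gx * (gy⁻¹ * g)) := by
  rw [hQ, mul_assoc, app3]
  rw [app3, app3, app3]
  simp only [inv_inv, gx, gy]
  rw [mul_inv_cancel_left, mul_inv_cancel_left]
  ring

lemma radial (Q : MonoidAlgebra ℂ Γ)
    (hQ : Q = (1 + MonoidAlgebra.single (FreeGroup.of 0) (1 : ℂ)
                 + MonoidAlgebra.single (FreeGroup.of 1) (1 : ℂ)) *
              (1 + MonoidAlgebra.single (FreeGroup.of 0)⁻¹ (1 : ℂ)
                 + MonoidAlgebra.single (FreeGroup.of 1)⁻¹ (1 : ℂ))) :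
    ∀ n (g : Γ), (Q ^ n).coeff g = q n (dL g.toWord) := by
  intro n
  induction n with
  | zero =>
    intro g
    rw [pow_zero, MonoidAlgebra.one_def, MonoidAlgebra.coeff_single, Finsupp.single_apply]
    cases hw : g.toWord with
    | nil =>
      have hg : g = 1 := FreeGroup.toWord_eq_nil_iff.mp hw
      rw [if_pos hg.symm, dL_nil, q_zero]
      simp
    | cons h t =>
      have hg : g ≠ 1 := by
        intro e; rw [e, FreeGroup.toWord_one] at hw; cases hw
      rw [if_neg (fun e => hg e.symm), q_zero, if_neg (dL_cons_ne_zero h t)]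
  | succ n ih =>
    intro g
    rw [pow_succ', Qapp Q hQ]
    simp only [ih, gx, gy, toWord_of_mul, toWord_ofinv_mul]
    have hstep1 : ∀ m, q (n+1) (m+1) = q n m + 4 * q n (m+1) + 4 * q n (m+1+1) := qstep1 n
    rcases hw : g.toWord with _ | ⟨⟨a, b⟩, t⟩
    · simp only [cons1_nil, cons1_cons, dL_nil, dL_pos_nil, dL_neg, dL_pos_neg, dL_pos_pos]
      norm_num
      rw [qstep0]
      ring
    · have hq1 : q (n+1) 1 = q n 0 + 4 * q n 1 + 4 * q n 2 := by
        have := qstep1 n 0; norm_num at this; exact this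
      have imposs : ∀ (i : Fin 2) (t' : List Ltr), g.toWord = (i, true) :: (i, false) :: t' →
          False := by
        intro i t' he
        exact FreeGroup.reduce.not (L₂ := []) (x := i) (b := true)
          (show FreeGroup.reduce g.toWord = [] ++ (i, true) :: (i, !true) :: t' by
            rw [FreeGroup.reduce_toWord, he]; rfl)
      fin_cases a <;> cases b
      · -- (0, false)
        simp only [cons1_cons, cons1_nil, dL_neg, dL_pos_neg, dL_pos_pos, dL_pos_nil, dL_nil]
        norm_num
        rw [hstep1 (dL t)]
        ring
      · -- (0, true)
        rcases t with _ | ⟨⟨c, d⟩, t⟩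
        · simp only [cons1_cons, cons1_nil, dL_neg, dL_pos_neg, dL_pos_pos, dL_pos_nil, dL_nil]
          norm_num
          rw [hq1]
          ring
        · fin_cases c <;> cases d
          · exact (imposs 0 t hw).elim
          · simp only [cons1_cons, cons1_nil, dL_neg, dL_pos_neg, dL_pos_pos, dL_pos_nil, dL_nil]
            norm_num
            rw [hstep1 (dL ((0, true) :: t))]
            ring
          · simp only [cons1_cons, cons1_nil, dL_neg, dL_pos_neg, dL_pos_pos, dL_pos_nil, dL_nil]
            norm_num
            rw [hstep1 (dL t)]
            ring
          · simp only [cons1_cons, cons1_nil, dL_neg, dL_pos_neg, dL_pos_pos, dL_pos_nil, dL_nil]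
            norm_num
            rw [hstep1 (dL ((1, true) :: t))]
            ring
      · -- (1, false)
        simp only [cons1_cons, cons1_nil, dL_neg, dL_pos_neg, dL_pos_pos, dL_pos_nil, dL_nil]
        norm_num
        rw [hstep1 (dL t)]
        ring
      · -- (1, true)
        rcases t with _ | ⟨⟨c, d⟩, t⟩
        · simp only [cons1_cons, cons1_nil, dL_neg, dL_pos_neg, dL_pos_pos, dL_pos_nil, dL_nil]
          norm_num
          rw [hq1]
          ring
        · fin_cases c <;> cases d
          · simp only [cons1_cons, cons1_nil, dL_neg, dL_pos_neg, dL_pos_pos, dL_pos_nil, dL_nil]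
            norm_num
            rw [hstep1 (dL t)]
            ring
          · simp only [cons1_cons, cons1_nil, dL_neg, dL_pos_neg, dL_pos_pos, dL_pos_nil, dL_nil]
            norm_num
            rw [hstep1 (dL ((0, true) :: t))]
            ring
          · exact (imposs 1 t hw).elim
          · simp only [cons1_cons, cons1_nil, dL_neg, dL_pos_neg, dL_pos_pos, dL_pos_nil, dL_nil]
            norm_num
            rw [hstep1 (dL ((1, true) :: t))]
            ring


lemma qG (n : ℕ) : q n 0 = coeff n Gs := by
  rw [q, pow_zero, mul_one]

end
end FGQR

/-- For `Q = (1+x+y)(1+x⁻¹+y⁻¹)` in the group ring of the free group on two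
generators, the constant coefficients `a_n = [Q^n]_0` satisfy `a_0 = 1`, `a_1 = 3`,
and `n a_n - (17n-12) a_{n-1} + 36(2n-3) a_{n-2} = 0` for `n ≥ 2`. -/
theorem free_group_Q_recurrence
    (Q : MonoidAlgebra ℂ (FreeGroup (Fin 2)))
    (hQ : Q = (1 + MonoidAlgebra.single (FreeGroup.of 0) (1 : ℂ)
                 + MonoidAlgebra.single (FreeGroup.of 1) (1 : ℂ)) *
              (1 + MonoidAlgebra.single (FreeGroup.of 0)⁻¹ (1 : ℂ)
                 + MonoidAlgebra.single (FreeGroup.of 1)⁻¹ (1 : ℂ)))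
    (a : ℕ → ℂ) (ha : ∀ n, a n = (Q ^ n).coeff 1) :
    a 0 = 1 ∧ a 1 = 3 ∧
    ∀ n : ℕ, 2 ≤ n →
      (n : ℂ) * a n - (17 * (n : ℂ) - 12) * a (n - 1)
      + 36 * (2 * (n : ℂ) - 3) * a (n - 2) = 0 := by
  have ha0 : ∀ n, a n = FGQR.q n 0 := by
    intro n
    rw [ha, FGQR.radial Q hQ n 1, FreeGroup.toWord_one, FGQR.dL_nil]
  refine ⟨?_, ?_, ?_⟩
  · rw [ha0 0, FGQR.q_zero]; simp
  · rw [ha0 1]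
    have h := FGQR.qstep0 0
    rw [FGQR.q_zero, FGQR.q_zero] at h
    norm_num at h
    exact h
  · intro n hn
    obtain ⟨m, rfl⟩ : ∃ m, n = m + 2 := ⟨n - 2, by omega⟩
    have h9 := FGQR.final9 m
    rw [← FGQR.qG, ← FGQR.qG, ← FGQR.qG, ← ha0 m, ← ha0 (m+1), ← ha0 (m+2)] at h9
    have e1 : m + 2 - 1 = m + 1 := by omega
    have e2 : m + 2 - 2 = m := by omega
    rw [e1, e2]
    push_cast
    linear_combination (1/9 : ℂ) * h9
end

section
/- Let Γ be the group presented by ⟨x, y | x²y = yx², y²x = xy²⟩ (the presented group on two generators with relators x²yx⁻²y⁻¹ and y²xy⁻²x⁻¹), and let P = x + x⁻¹ + y + y⁻¹ ∈ ℂ[Γ]. Let Q = (x + x⁻¹ + z(y + y⁻¹)) · (x + x⁻¹ + z⁻¹(y + y⁻¹)) ∈ ℂ[ℤ³], where x, y, z are the standard generators of ℤ³. Then for every n ∈ ℕ, [P^{2n}]_0 computed in ℂ[Γ] equals [Q^n]_0 computed in ℂ[ℤ³]. -/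
abbrev drels : Set (FreeGroup (Fin 2)) :=
  {FreeGroup.of 0 ^ 2 * FreeGroup.of 1 * (FreeGroup.of 0)⁻¹ ^ 2 * (FreeGroup.of 1)⁻¹,
   FreeGroup.of 1 ^ 2 * FreeGroup.of 0 * (FreeGroup.of 1)⁻¹ ^ 2 * (FreeGroup.of 0)⁻¹}

abbrev DG := PresentedGroup drels

noncomputable def dX : DG := PresentedGroup.of 0
noncomputable def dY : DG := PresentedGroup.of 1

lemma drel_one {r : FreeGroup (Fin 2)} (h : r ∈ drels) : PresentedGroup.mk drels r = 1 :=
  (QuotientGroup.eq_one_iff _).mpr (Subgroup.subset_normalClosure h)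

lemma cXY : Commute (dX^2) dY := by
  have h := drel_one (r := FreeGroup.of 0 ^ 2 * FreeGroup.of 1 * (FreeGroup.of 0)⁻¹ ^ 2 * (FreeGroup.of 1)⁻¹) (Or.inl rfl)
  simp only [map_mul, map_pow, map_inv] at h
  have h2 : dX^2 * dY * (dX⁻¹)^2 * dY⁻¹ = 1 := h
  rw [inv_pow, mul_inv_eq_one, mul_inv_eq_iff_eq_mul] at h2
  exact h2

lemma cYX : Commute (dY^2) dX := by
  have h := drel_one (r := FreeGroup.of 1 ^ 2 * FreeGroup.of 0 * (FreeGroup.of 1)⁻¹ ^ 2 * (FreeGroup.of 0)⁻¹) (Or.inr rfl)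
  simp only [map_mul, map_pow, map_inv] at h
  have h2 : dY^2 * dX * (dY⁻¹)^2 * dX⁻¹ = 1 := h
  rw [inv_pow, mul_inv_eq_one, mul_inv_eq_iff_eq_mul] at h2
  exact h2

noncomputable def da : DG := dX^2
noncomputable def db : DG := dY^2
noncomputable def dc : DG := dX * dY

lemma comm_ab : Commute da db := by
  show da * db = db * da
  unfold da db
  calc dX^2 * dY^2 = (dX^2 * dY) * dY := by rw [pow_two dY, mul_assoc]
    _ = dY * dX^2 * dY := by rw [cXY.eq]
    _ = dY * (dX^2 * dY) := by rw [mul_assoc]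
    _ = dY * (dY * dX^2) := by rw [cXY.eq]
    _ = dY^2 * dX^2 := by rw [pow_two dY, mul_assoc]

lemma comm_ac : Commute da dc := by
  show da * dc = dc * da
  unfold da dc
  calc dX^2 * (dX * dY) = dX * (dX^2 * dY) := by group
    _ = dX * (dY * dX^2) := by rw [cXY.eq]
    _ = dX * dY * dX^2 := by rw [mul_assoc]

lemma comm_bc : Commute db dc := by
  show db * dc = dc * db
  unfold db dc
  calc dY^2 * (dX * dY) = (dY^2 * dX) * dY := by rw [mul_assoc]
    _ = (dX * dY^2) * dY := by rw [cYX.eq]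
    _ = dX * dY * dY^2 := by group

lemma merge_pows {G : Type*} [Group G] {a b c : G}
    (hab : Commute a b) (hac : Commute a c) (hbc : Commute b c)
    (p q r i j k : ℤ) :
    (a^p * (b^q * c^r)) * (a^i * (b^j * c^k)) = a^(p+i) * (b^(q+j) * c^(r+k)) := by
  have h1 : b^q * a^i = a^i * b^q := ((hab.zpow_zpow i q).symm).eq
  have h2 : c^r * a^i = a^i * c^r := ((hac.zpow_zpow i r).symm).eq
  have h3 : c^r * b^j = b^j * c^r := ((hbc.zpow_zpow j r).symm).eq
  simp only [zpow_add]
  simp only [mul_assoc]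
  rw [show c^r * (a^i * (b^j * c^k)) = a^i * (c^r * (b^j * c^k)) from by
    rw [← mul_assoc, h2, mul_assoc]]
  rw [show b^q * (a^i * (c^r * (b^j * c^k))) = a^i * (b^q * (c^r * (b^j * c^k))) from by
    rw [← mul_assoc, h1, mul_assoc]]
  rw [show c^r * (b^j * c^k) = b^j * (c^r * c^k) from by
    rw [← mul_assoc, h3, mul_assoc]]
noncomputable def dmu : Fin 4 → DG := ![dX, dX⁻¹, dY, dY⁻¹]
def dexp : Fin 4 → Fin 4 → ℤ × ℤ × ℤ :=
  ![![(1,0,0), (0,0,0), (0,0,1), (0,-1,1)],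
    ![(0,0,0), (-1,0,0), (-1,0,1), (-1,-1,1)],
    ![(1,1,-1), (0,1,-1), (0,1,0), (0,0,0)],
    ![(1,0,-1), (0,0,-1), (0,0,0), (0,-1,0)]]

lemma dtable (s t : Fin 4) :
    dmu s * dmu t = da^(dexp s t).1 * (db^(dexp s t).2.1 * dc^(dexp s t).2.2) := by
  fin_cases s <;> fin_cases t <;>
    simp only [dmu, dexp, da, db, dc, Matrix.cons_val_zero, Matrix.cons_val_one,
      Matrix.head_cons, Matrix.cons_val_two, Matrix.tail_cons, Matrix.cons_val_three] <;>
    norm_num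
  all_goals (try group)
  case _ => rw [zpow_two]
  case _ =>
    have c1 : Commute (dY^(-2:ℤ)) dX := by
      have h := cYX.inv_left
      have e : dY^(-2:ℤ) = (dY^2)⁻¹ := by group
      rw [e]; exact h
    rw [c1.eq]; group
  case _ =>
    have c1 : Commute (dY^(-2:ℤ)) dX := by
      have h := cYX.inv_left
      have e : dY^(-2:ℤ) = (dY^2)⁻¹ := by group
      rw [e]; exact h
    rw [mul_assoc (dX^(-2:ℤ)), c1.eq]; group
  case _ =>
    have c2 : Commute (dX^(2:ℤ)) dY := by
      have e : dX^(2:ℤ) = dX^2 := by group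
      rw [e]; exact cXY
    rw [c2.eq]; group
  case _ => rw [zpow_two]
  case _ =>
    have c3 : Commute (dX^(2:ℤ)) (dY^(-1:ℤ)) := by
      have e : dX^(2:ℤ) = dX^2 := by group
      rw [e]; exact cXY.zpow_right (-1)
    rw [c3.eq]; group
-- ab-type homs into Multiplicative ℤ
noncomputable def alph (u v : Multiplicative ℤ) : DG →* Multiplicative ℤ :=
  PresentedGroup.toGroup (f := ![u, v]) (by
    intro r hr
    simp only [Set.mem_insert_iff, Set.mem_singleton_iff] at hr
    rcases hr with rfl | rfl <;>
      simp only [map_mul, map_pow, map_inv, FreeGroup.lift_apply_of,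
        Matrix.cons_val_zero, Matrix.cons_val_one, Matrix.head_cons] <;>
      (refine Multiplicative.toAdd.injective ?_) <;>
      (simp only [toAdd_mul, toAdd_zpow, toAdd_pow, toAdd_inv, toAdd_one]) <;>
      ring)

lemma alph_X (u v : Multiplicative ℤ) : alph u v dX = u := PresentedGroup.toGroup.of _
lemma alph_Y (u v : Multiplicative ℤ) : alph u v dY = v := PresentedGroup.toGroup.of _

open DihedralGroup in
noncomputable def tau : DG →* DihedralGroup 0 :=
  PresentedGroup.toGroup (f := ![sr 0, sr 1]) (by
    intro r hr
    simp only [Set.mem_insert_iff, Set.mem_singleton_iff] at hr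
    rcases hr with rfl | rfl <;>
      simp only [map_mul, map_pow, map_inv, FreeGroup.lift_apply_of,
        Matrix.cons_val_zero, Matrix.cons_val_one, Matrix.head_cons] <;>
      decide)

lemma tau_X : tau dX = DihedralGroup.sr 0 := PresentedGroup.toGroup.of _
lemma tau_Y : tau dY = DihedralGroup.sr 1 := PresentedGroup.toGroup.of _

lemma r_one_zpow (k : ℤ) : (DihedralGroup.r 1 : DihedralGroup 0) ^ k = DihedralGroup.r k := by
  induction k using Int.induction_on with
  | zero => rfl
  | succ n ih => rw [zpow_add_one, ih]; exact DihedralGroup.r_mul_r _ _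
  | pred n ih => rw [zpow_sub_one, ih]; rw [show ((DihedralGroup.r 1)⁻¹ : DihedralGroup 0) = DihedralGroup.r (-1) from rfl]; exact (DihedralGroup.r_mul_r _ _).trans (congrArg DihedralGroup.r (sub_eq_add_neg (-(n:ℤ)) 1).symm)

def vA : Fin 4 → (Fin 3 → ℤ) := ![![1,0,0], ![-1,0,0], ![0,1,1], ![0,-1,1]]
def vB : Fin 4 → (Fin 3 → ℤ) := ![![1,0,0], ![-1,0,0], ![0,1,-1], ![0,-1,-1]]

lemma ev (s t : Fin 4) : vA s + vB t =
    ![2*(dexp s t).1 + (dexp s t).2.2, 2*(dexp s t).2.1 + (dexp s t).2.2, -(dexp s t).2.2] := by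
  fin_cases s <;> fin_cases t <;> decide

lemma dclaim (l : List (Fin 4 × Fin 4)) :
    ∃ i j k : ℤ,
      (l.map (fun p => dmu p.1 * dmu p.2)).prod = da^i * (db^j * dc^k) ∧
      (l.map (fun p => vA p.1 + vB p.2)).sum = ![2*i+k, 2*j+k, -k] := by
  induction l with
  | nil =>
    refine ⟨0,0,0, by simp, ?_⟩
    funext x; fin_cases x <;> simp
  | cons p l ih =>
    obtain ⟨i,j,k,h1,h2⟩ := ih
    refine ⟨(dexp p.1 p.2).1 + i, (dexp p.1 p.2).2.1 + j, (dexp p.1 p.2).2.2 + k, ?_, ?_⟩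
    · rw [List.map_cons, List.prod_cons, h1, dtable, merge_pows comm_ab comm_ac comm_bc]
    · rw [List.map_cons, List.sum_cons, h2, ev]
      funext x; fin_cases x <;> simp <;> ring

lemma tau_a : tau da = 1 := by
  rw [da, map_pow, tau_X]; decide
lemma tau_b : tau db = 1 := by
  rw [db, map_pow, tau_Y]; decide
lemma tau_c : tau dc = DihedralGroup.r 1 := by
  rw [dc, map_mul, tau_X, tau_Y]; decide

lemma key_iff (l : List (Fin 4 × Fin 4)) :
    (l.map (fun p => dmu p.1 * dmu p.2)).prod = 1 ↔
    (l.map (fun p => vA p.1 + vB p.2)).sum = 0 := by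
  obtain ⟨i,j,k,h1,h2⟩ := dclaim l
  rw [h1, h2]
  constructor
  · intro h
    have hk : k = 0 := by
      have ht := congrArg tau h
      simp only [map_mul, map_zpow, map_one, tau_a, tau_b, tau_c, one_zpow, one_mul,
        r_one_zpow] at ht
      have := DihedralGroup.r.injEq (n := 0) k 0 ▸ (ht.trans (DihedralGroup.one_def))
      exact this
    have hi : 2*i + k = 0 := by
      have ht := congrArg (alph (Multiplicative.ofAdd 1) 1) h
      simp only [map_mul, map_zpow, map_one] at ht
      rw [show alph (Multiplicative.ofAdd 1) 1 da = Multiplicative.ofAdd 2 from by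
            rw [da, map_pow, alph_X]; rfl,
          show alph (Multiplicative.ofAdd 1) 1 db = 1 from by
            rw [db, map_pow, alph_Y]; rfl,
          show alph (Multiplicative.ofAdd 1) 1 dc = Multiplicative.ofAdd 1 from by
            rw [dc, map_mul, alph_X, alph_Y]; rfl] at ht
      have := congrArg Multiplicative.toAdd ht
      simp only [toAdd_mul, toAdd_zpow, toAdd_one, one_zpow, toAdd_ofAdd, smul_eq_mul] at this
      omega
    have hj : 2*j + k = 0 := by
      have ht := congrArg (alph 1 (Multiplicative.ofAdd 1)) h
      simp only [map_mul, map_zpow, map_one] at ht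
      rw [show alph 1 (Multiplicative.ofAdd 1) da = 1 from by
            rw [da, map_pow, alph_X]; rfl,
          show alph 1 (Multiplicative.ofAdd 1) db = Multiplicative.ofAdd 2 from by
            rw [db, map_pow, alph_Y]; rfl,
          show alph 1 (Multiplicative.ofAdd 1) dc = Multiplicative.ofAdd 1 from by
            rw [dc, map_mul, alph_X, alph_Y]; rfl] at ht
      have := congrArg Multiplicative.toAdd ht
      simp only [toAdd_mul, toAdd_zpow, toAdd_one, one_zpow, toAdd_ofAdd, smul_eq_mul] at this
      omega
    funext x; fin_cases x <;> simp <;> omega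
  · intro h
    have h0 := congrFun h 0
    have h1' := congrFun h 1
    have h2' := congrFun h 2
    simp at h0 h1' h2'
    have hk : k = 0 := by omega
    have hi : i = 0 := by omega
    have hj : j = 0 := by omega
    rw [hi, hj, hk]; simp

lemma expandM {G : Type*} [Monoid G] {ι : Type*} [Fintype ι] (g : ι → G) (n : ℕ) :
    (∑ s : ι, MonoidAlgebra.single (g s) (1:ℂ)) ^ n
    = ∑ f : Fin n → ι, MonoidAlgebra.single ((List.ofFn fun i => g (f i)).prod) (1:ℂ) := by
  induction n with
  | zero =>
    simp only [pow_zero, List.ofFn_zero, List.prod_nil]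
    rw [Finset.sum_const, Finset.card_univ]
    simp [MonoidAlgebra.one_def, Fintype.card_eq_one_iff_nonempty_unique]
  | succ n ih =>
    rw [pow_succ', ih, Finset.sum_mul_sum]
    refine (Fintype.sum_prod_type (f := fun p : ι × (Fin n → ι) =>
      MonoidAlgebra.single (g p.1) (1:ℂ) *
        MonoidAlgebra.single ((List.ofFn fun i => g (p.2 i)).prod) (1:ℂ))).symm.trans ?_
    apply Fintype.sum_equiv (Fin.consEquiv (fun _ => ι))
    intro p
    rw [MonoidAlgebra.single_mul_single, one_mul]
    congr 1
    rw [List.ofFn_succ, List.prod_cons]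
    simp [Fin.consEquiv]

lemma expandA {A : Type*} [AddCommMonoid A] {ι : Type*} [Fintype ι] (g : ι → A) (n : ℕ) :
    (∑ s : ι, AddMonoidAlgebra.single (g s) (1:ℂ)) ^ n
    = ∑ f : Fin n → ι, AddMonoidAlgebra.single ((List.ofFn fun i => g (f i)).sum) (1:ℂ) := by
  induction n with
  | zero =>
    simp only [pow_zero, List.ofFn_zero, List.sum_nil]
    rw [Finset.sum_const, Finset.card_univ]
    simp [AddMonoidAlgebra.one_def, Fintype.card_eq_one_iff_nonempty_unique]
  | succ n ih =>
    rw [pow_succ', ih, Finset.sum_mul_sum]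
    refine (Fintype.sum_prod_type (f := fun p : ι × (Fin n → ι) =>
      AddMonoidAlgebra.single (g p.1) (1:ℂ) *
        AddMonoidAlgebra.single ((List.ofFn fun i => g (p.2 i)).sum) (1:ℂ))).symm.trans ?_
    apply Fintype.sum_equiv (Fin.consEquiv (fun _ => ι))
    intro p
    rw [AddMonoidAlgebra.single_mul_single, one_mul]
    congr 1
    rw [List.ofFn_succ, List.sum_cons]
    simp [Fin.consEquiv]


/-- For `Γ = ⟨x, y | x²y = yx², y²x = xy²⟩` (the diamond-lattice group) and
`P = x + x⁻¹ + y + y⁻¹ ∈ ℂ[Γ]`, the constant coefficient `[P^{2n}]_0` equals the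
constant coefficient `[Q^n]_0` in `ℂ[ℤ³]` of
`Q = (x + x⁻¹ + z(y+y⁻¹))(x + x⁻¹ + z⁻¹(y+y⁻¹))`. -/
theorem diamond_lattice_const_coeff
    (rels : Set (FreeGroup (Fin 2)))
    (hrels : rels = {FreeGroup.of 0 ^ 2 * FreeGroup.of 1 * (FreeGroup.of 0)⁻¹ ^ 2 *
                       (FreeGroup.of 1)⁻¹,
                     FreeGroup.of 1 ^ 2 * FreeGroup.of 0 * (FreeGroup.of 1)⁻¹ ^ 2 *
                       (FreeGroup.of 0)⁻¹})
    (P : MonoidAlgebra ℂ (PresentedGroup rels))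
    (hP : P = MonoidAlgebra.single (PresentedGroup.of 0) (1 : ℂ)
            + MonoidAlgebra.single (PresentedGroup.of 0)⁻¹ (1 : ℂ)
            + MonoidAlgebra.single (PresentedGroup.of 1) (1 : ℂ)
            + MonoidAlgebra.single (PresentedGroup.of 1)⁻¹ (1 : ℂ))
    (Q : AddMonoidAlgebra ℂ (Fin 3 → ℤ))
    (hQ : Q = (AddMonoidAlgebra.single ![1, 0, 0] (1 : ℂ)
             + AddMonoidAlgebra.single ![-1, 0, 0] (1 : ℂ)
             + AddMonoidAlgebra.single ![0, 1, 1] (1 : ℂ)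
             + AddMonoidAlgebra.single ![0, -1, 1] (1 : ℂ)) *
              (AddMonoidAlgebra.single ![1, 0, 0] (1 : ℂ)
             + AddMonoidAlgebra.single ![-1, 0, 0] (1 : ℂ)
             + AddMonoidAlgebra.single ![0, 1, -1] (1 : ℂ)
             + AddMonoidAlgebra.single ![0, -1, -1] (1 : ℂ)))
    (n : ℕ) :
    (P ^ (2 * n)).coeff 1 = (Q ^ n).coeff 0 := by
  subst hrels
  have hPs : P = ∑ s : Fin 4, MonoidAlgebra.single (dmu s) (1:ℂ) := by
    rw [hP, Fin.sum_univ_four]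
    simp [dmu, dX, dY]
  have hQs : Q = ∑ p : Fin 4 × Fin 4, AddMonoidAlgebra.single (vA p.1 + vB p.2) (1:ℂ) := by
    rw [hQ]
    rw [show (AddMonoidAlgebra.single ![(1:ℤ), 0, 0] (1 : ℂ)
             + AddMonoidAlgebra.single ![-1, 0, 0] (1 : ℂ)
             + AddMonoidAlgebra.single ![0, 1, 1] (1 : ℂ)
             + AddMonoidAlgebra.single ![0, -1, 1] (1 : ℂ))
        = ∑ s : Fin 4, AddMonoidAlgebra.single (vA s) (1:ℂ) from by
      rw [Fin.sum_univ_four]; simp [vA]]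
    rw [show (AddMonoidAlgebra.single ![(1:ℤ), 0, 0] (1 : ℂ)
             + AddMonoidAlgebra.single ![-1, 0, 0] (1 : ℂ)
             + AddMonoidAlgebra.single ![0, 1, -1] (1 : ℂ)
             + AddMonoidAlgebra.single ![0, -1, -1] (1 : ℂ))
        = ∑ s : Fin 4, AddMonoidAlgebra.single (vB s) (1:ℂ) from by
      rw [Fin.sum_univ_four]; simp [vB]]
    rw [Finset.sum_mul_sum]
    refine Eq.trans ?_ (Fintype.sum_prod_type (f := fun p : Fin 4 × Fin 4 =>
        AddMonoidAlgebra.single (vA p.1 + vB p.2) (1:ℂ))).symm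
    exact Finset.sum_congr rfl fun i _ => Finset.sum_congr rfl fun j _ => by
      rw [AddMonoidAlgebra.single_mul_single, one_mul]
  have hP2 : P ^ 2 = ∑ p : Fin 4 × Fin 4, MonoidAlgebra.single (dmu p.1 * dmu p.2) (1:ℂ) := by
    rw [hPs, pow_two, Finset.sum_mul_sum]
    refine Eq.trans ?_ (Fintype.sum_prod_type (f := fun p : Fin 4 × Fin 4 =>
        MonoidAlgebra.single (dmu p.1 * dmu p.2) (1:ℂ))).symm
    exact Finset.sum_congr rfl fun i _ => Finset.sum_congr rfl fun j _ => by
      rw [MonoidAlgebra.single_mul_single, one_mul]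
  rw [pow_mul, hP2, hQs, expandM, expandA]
  rw [MonoidAlgebra.coeff_sum, AddMonoidAlgebra.coeff_sum, Finset.sum_apply', Finset.sum_apply']
  refine Finset.sum_congr rfl fun f _ => ?_
  classical
  rw [MonoidAlgebra.coeff_single, AddMonoidAlgebra.coeff_single, Finsupp.single_apply, Finsupp.single_apply]
  have hiff := key_iff (List.ofFn f)
  rw [List.map_ofFn, List.map_ofFn] at hiff
  have hiff' : ((List.ofFn fun i => dmu (f i).1 * dmu (f i).2).prod = 1 ↔
      (List.ofFn fun i => vA (f i).1 + vB (f i).2).sum = 0) := hiff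
  exact if_congr hiff' rfl rfl
end
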